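/- arXiv:1403.5024 — 4 statements merged into one kernel-verified Lean document; each statement's English description precedes it below -/
import Mathlib

section
/- Let σ : I¹ → I be a linear system, and for each k ≥ 1 let L_k denote the supremum of the lengths of the connected components of I^k. Then L_k → 0 as k → ∞. -/
noncomputable section

/-- Iterated preimages `I^k` for a map `σ` with domain pieces `I1 ⊆ I`:
`I⁰ = I`, `I^{k+1} = {x ∈ I¹ : σ x ∈ I^k}`. -/
def levIter (σ : ℝ → ℝ) (I1 I : Set ℝ) : ℕ → Set ℝ
  | 0 => I
  | k + 1 => {x | x ∈ I1 ∧ σ x ∈ levIter σ I1 I k}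

/-- A linear system `σ : I¹ → I` on finite collections of pairwise disjoint
bounded open intervals `I = I₁ ∪ ⋯ ∪ Iₙ` and `I¹ = I¹₁ ∪ ⋯ ∪ I¹ₘ`. -/
structure LinearSystem (n m : ℕ) where
  /-- the intervals of the range -/
  I : Fin n → Set ℝ
  /-- the intervals of the domain -/
  I1 : Fin m → Set ℝ
  /-- the map (extended arbitrarily outside `I¹`) -/
  σ : ℝ → ℝ
  hI : ∀ i, ∃ a b : ℝ, a < b ∧ I i = Set.Ioo a b
  hI1 : ∀ j, ∃ a b : ℝ, a < b ∧ I1 j = Set.Ioo a b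
  hdisj : Pairwise fun i i' => Disjoint (I i) (I i')
  hdisj1 : Pairwise fun j j' => Disjoint (I1 j) (I1 j')
  /-- each `I¹ⱼ` is contained in some `Iᵢ` -/
  hsub : ∀ j, ∃ i, I1 j ⊆ I i
  /-- `σ` restricted to each `I¹ⱼ` is an affine bijection onto some `Iᵢ` -/
  haff : ∀ j, ∃ i, ∃ a b : ℝ, a ≠ 0 ∧ (∀ x ∈ I1 j, σ x = a * x + b) ∧
    σ '' I1 j = I i
  /-- exactness: each endpoint of each `Iᵢ` is an endpoint of a component
  `I¹ⱼ ⊆ Iᵢ` -/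
  hexact : ∀ i, (∃ j, I1 j ⊆ I i ∧ sInf (I1 j) = sInf (I i)) ∧
    (∃ j, I1 j ⊆ I i ∧ sSup (I1 j) = sSup (I i))
  /-- mixing: some `I^N` meets every `Iᵢ` in a nonempty disconnected set -/
  hmix : ∃ N : ℕ, 1 ≤ N ∧ ∀ i,
    ((levIter σ (⋃ j, I1 j) (⋃ i, I i) N) ∩ I i).Nonempty ∧
    ¬ IsPreconnected ((levIter σ (⋃ j, I1 j) (⋃ i, I i) N) ∩ I i)

/-- The set `I^k` of a linear system. -/
def LinearSystem.lev {n m : ℕ} (L : LinearSystem n m) : ℕ → Set ℝ :=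
  levIter L.σ (⋃ j, L.I1 j) (⋃ i, L.I i)

/-- The Julia set `J_σ = ⋂_{k ≥ 1} I^k` of a linear system. -/
def LinearSystem.julia {n m : ℕ} (L : LinearSystem n m) : Set ℝ :=
  ⋂ k : ℕ, L.lev (k + 1)

end

/-- `maxCompLength L k` is the supremum `L_k` of the lengths of the connected
components of `I^k` (a component of `I^k` is a bounded interval, whose length
is `sSup C - sInf C`). -/
noncomputable def maxCompLength {n m : ℕ} (L : LinearSystem n m) (k : ℕ) : ℝ :=
  sSup {r : ℝ | ∃ x ∈ L.lev k,
    r = sSup (connectedComponentIn (L.lev k) x) -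
        sInf (connectedComponentIn (L.lev k) x)}

namespace LSAux
open Set

variable {n m : ℕ} (L : LinearSystem n m)

/-- target index of branch `j` -/
noncomputable def tgt (j : Fin m) : Fin n := (L.haff j).choose
/-- slope of branch `j` -/
noncomputable def sl (j : Fin m) : ℝ := (L.haff j).choose_spec.choose
/-- offset of branch `j` -/
noncomputable def off (j : Fin m) : ℝ := (L.haff j).choose_spec.choose_spec.choose
/-- the affine map of branch `j` -/
noncomputable def A (j : Fin m) : ℝ → ℝ := fun x => sl L j * x + off L j
/-- index of the `I` interval containing `I1 j` -/
noncomputable def hcj (j : Fin m) : Fin n := (L.hsub j).choose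

lemma sl_ne (j : Fin m) : sl L j ≠ 0 :=
  (L.haff j).choose_spec.choose_spec.choose_spec.1

lemma sigma_eq (j : Fin m) : ∀ x ∈ L.I1 j, L.σ x = A L j x :=
  (L.haff j).choose_spec.choose_spec.choose_spec.2.1

lemma image_eq (j : Fin m) : L.σ '' L.I1 j = L.I (tgt L j) :=
  (L.haff j).choose_spec.choose_spec.choose_spec.2.2

lemma I1_subset (j : Fin m) : L.I1 j ⊆ L.I (hcj L j) := (L.hsub j).choose_spec

lemma A_injective (j : Fin m) : Function.Injective (A L j) := by
  intro x y h
  simp only [A] at h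
  have h2 : sl L j * x = sl L j * y := by linarith
  exact mul_left_cancel₀ (sl_ne L j) h2

lemma A_image_eq (j : Fin m) : A L j '' L.I1 j = L.I (tgt L j) := by
  rw [← image_eq L j]
  exact image_congr fun x hx => (sigma_eq L j x hx).symm

lemma mem_I1_iff (j : Fin m) {x : ℝ} : x ∈ L.I1 j ↔ A L j x ∈ L.I (tgt L j) := by
  constructor
  · intro hx; rw [← A_image_eq L j]; exact mem_image_of_mem _ hx
  · intro hx
    rw [← A_image_eq L j] at hx
    obtain ⟨y, hy, hxy⟩ := hx
    rwa [← A_injective L j hxy]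

end LSAux
namespace LSAux
open Set

variable {n m : ℕ} (L : LinearSystem n m)

/-- cylinder sets -/
def cyl : List (Fin m) → Set ℝ
  | [] => ⋃ i, L.I i
  | j :: w => {x | x ∈ L.I1 j ∧ L.σ x ∈ cyl w}

lemma lev_zero : L.lev 0 = ⋃ i, L.I i := rfl

lemma lev_succ (k : ℕ) :
    L.lev (k + 1) = {x | x ∈ ⋃ j, L.I1 j ∧ L.σ x ∈ L.lev k} := rfl

lemma cyl_subset_iUnion : ∀ w : List (Fin m), cyl L w ⊆ ⋃ i, L.I i := by
  intro w
  cases w with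
  | nil => exact subset_rfl
  | cons j w =>
      intro x hx
      exact mem_iUnion.2 ⟨hcj L j, I1_subset L j hx.1⟩

lemma cyl_cons_subset (j : Fin m) (w : List (Fin m)) : cyl L (j :: w) ⊆ L.I1 j :=
  fun _ hx => hx.1

lemma cyl_cons_eq (j : Fin m) (w : List (Fin m)) :
    cyl L (j :: w) = A L j ⁻¹' (cyl L w ∩ L.I (tgt L j)) := by
  ext x
  simp only [cyl, mem_setOf_eq, mem_preimage, mem_inter_iff]
  constructor
  · intro ⟨hx1, hx2⟩
    rw [sigma_eq L j x hx1] at hx2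
    exact ⟨hx2, (mem_I1_iff L j).1 hx1⟩
  · intro ⟨hx1, hx2⟩
    have hxI : x ∈ L.I1 j := (mem_I1_iff L j).2 hx2
    exact ⟨hxI, by rwa [sigma_eq L j x hxI]⟩

lemma lev_eq (k : ℕ) :
    L.lev k = ⋃ (w : List (Fin m)) (_ : w.length = k), cyl L w := by
  induction k with
  | zero =>
      ext x
      constructor
      · intro hx; exact mem_iUnion₂.2 ⟨[], rfl, hx⟩
      · intro hx
        obtain ⟨w, hw, hx⟩ := mem_iUnion₂.1 hx
        rw [List.length_eq_zero_iff] at hw; subst hw; exact hx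
  | succ k ih =>
      rw [lev_succ]
      ext x
      constructor
      · rintro ⟨hx1, hx2⟩
        rw [ih] at hx2
        obtain ⟨w, hw, hxw⟩ := mem_iUnion₂.1 hx2
        obtain ⟨j, hj⟩ := mem_iUnion.1 hx1
        exact mem_iUnion₂.2 ⟨j :: w, by simp [hw], hj, hxw⟩
      · intro hx
        obtain ⟨w, hw, hx⟩ := mem_iUnion₂.1 hx
        cases w with
        | nil => simp at hw
        | cons j w =>
            refine ⟨mem_iUnion.2 ⟨j, hx.1⟩, ?_⟩
            rw [ih]
            exact mem_iUnion₂.2 ⟨w, by simpa using hw, hx.2⟩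

lemma cyl_subset_lev (w : List (Fin m)) : cyl L w ⊆ L.lev w.length := by
  rw [lev_eq]
  intro x hx
  exact mem_iUnion₂.2 ⟨w, rfl, hx⟩

/-- affine preimage of an open interval -/
lemma affine_preimage_Ioo (a b c d : ℝ) (ha : a ≠ 0) (hcd : c ≤ d) :
    ∃ e f : ℝ, e ≤ f ∧ (fun x => a * x + b) ⁻¹' Ioo c d = Ioo e f ∧
      f - e = (d - c) / |a| := by
  rcases lt_or_gt_of_ne ha with hneg | hpos
  · have hinv : a⁻¹ ≤ 0 := inv_nonpos.2 hneg.le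
    refine ⟨(d - b) / a, (c - b) / a, ?_, ?_, ?_⟩
    · rw [div_eq_mul_inv, div_eq_mul_inv]
      exact mul_le_mul_of_nonpos_right (by linarith) hinv
    · ext x
      simp only [mem_preimage, mem_Ioo]
      constructor
      · intro ⟨h1, h2⟩
        constructor
        · rw [div_lt_iff_of_neg hneg]; linarith
        · rw [lt_div_iff_of_neg hneg]; linarith
      · intro ⟨h1, h2⟩
        rw [div_lt_iff_of_neg hneg] at h1
        rw [lt_div_iff_of_neg hneg] at h2
        constructor <;> linarith
    · rw [abs_of_neg hneg, div_neg]
      field_simp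
      ring
  · have hinv : 0 ≤ a⁻¹ := inv_nonneg.2 hpos.le
    refine ⟨(c - b) / a, (d - b) / a, ?_, ?_, ?_⟩
    · rw [div_eq_mul_inv, div_eq_mul_inv]
      exact mul_le_mul_of_nonneg_right (by linarith) hinv
    · ext x
      simp only [mem_preimage, mem_Ioo]
      constructor
      · intro ⟨h1, h2⟩
        constructor
        · rw [div_lt_iff₀ hpos]; linarith
        · rw [lt_div_iff₀ hpos]; linarith
      · intro ⟨h1, h2⟩
        rw [div_lt_iff₀ hpos] at h1
        rw [lt_div_iff₀ hpos] at h2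
        constructor <;> linarith
    · rw [abs_of_pos hpos]
      field_simp
      ring

end LSAux
namespace LSAux
open Set

variable {n m : ℕ} (L : LinearSystem n m)

/-- length of a set -/
noncomputable def len (S : Set ℝ) : ℝ := sSup S - sInf S

lemma len_Ioo {a b : ℝ} (h : a < b) : len (Ioo a b) = b - a := by
  rw [len, csSup_Ioo h, csInf_Ioo h]

lemma len_empty : len (∅ : Set ℝ) = 0 := by
  rw [len, Real.sSup_empty, Real.sInf_empty, sub_zero]

lemma len_I_pos (i : Fin n) : 0 < len (L.I i) := by
  obtain ⟨a, b, hab, h⟩ := L.hI i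
  rw [h, len_Ioo hab]
  linarith

/-- representation of nonempty-word cylinders as intervals -/
lemma cyl_rep (j : Fin m) (w : List (Fin m)) :
    ∃ a b : ℝ, a ≤ b ∧ cyl L (j :: w) = Ioo a b := by
  induction w generalizing j with
  | nil =>
      obtain ⟨a, b, hab, h⟩ := L.hI1 j
      refine ⟨a, b, hab.le, ?_⟩
      rw [cyl_cons_eq]
      have : (cyl L [] : Set ℝ) ∩ L.I (tgt L j) = L.I (tgt L j) := by
        apply inter_eq_self_of_subset_right
        exact subset_iUnion _ _
      rw [this]
      have him : A L j ⁻¹' L.I (tgt L j) = L.I1 j := by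
        rw [← A_image_eq L j, preimage_image_eq _ (A_injective L j)]
      rw [him, h]
  | cons j' w' ih =>
      obtain ⟨a, b, hab, h⟩ := ih j'
      obtain ⟨p, q, hpq, hI⟩ := L.hI (tgt L j)
      rw [cyl_cons_eq, h, hI, Ioo_inter_Ioo]
      rcases le_total (a ⊔ p) (b ⊓ q) with h' | h'
      · obtain ⟨e, f, hef, heq, -⟩ :=
          affine_preimage_Ioo (sl L j) (off L j) (a ⊔ p) (b ⊓ q) (sl_ne L j) h'
        exact ⟨e, f, hef, heq⟩
      · refine ⟨0, 0, le_refl _, ?_⟩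
        rw [Ioo_eq_empty (not_lt.2 h'), preimage_empty, Ioo_self]

lemma cyl_open (w : List (Fin m)) : IsOpen (cyl L w) := by
  cases w with
  | nil =>
      apply isOpen_iUnion
      intro i
      obtain ⟨a, b, -, h⟩ := L.hI i
      rw [h]; exact isOpen_Ioo
  | cons j w =>
      obtain ⟨a, b, -, h⟩ := cyl_rep L j w
      rw [h]; exact isOpen_Ioo

lemma cyl_disjoint : ∀ (w w' : List (Fin m)), w.length = w'.length → w ≠ w' →
    Disjoint (cyl L w) (cyl L w') := by
  intro w
  induction w with
  | nil =>
      intro w' hl hne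
      have h0 : w' = [] := List.length_eq_zero_iff.1 hl.symm
      exact (hne h0.symm).elim
  | cons j w ih =>
      intro w' hl hne
      cases w' with
      | nil => simp at hl
      | cons j' w'' =>
          by_cases hj : j = j'
          · subst hj
            have hww : w ≠ w'' := by
              intro h; exact hne (by rw [h])
            have hd : Disjoint (cyl L w) (cyl L w'') :=
              ih w'' (by simpa using hl) hww
            rw [cyl_cons_eq, cyl_cons_eq]
            exact (hd.mono inter_subset_left inter_subset_left).preimage _
          · have hd : Disjoint (L.I1 j) (L.I1 j') := L.hdisj1 hj
            exact hd.mono (cyl_cons_subset L j w) (cyl_cons_subset L j' w'')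

end LSAux
namespace LSAux
open Set

variable {n m : ℕ} (L : LinearSystem n m)

lemma len_Ioo' {a b : ℝ} (h : a ≤ b) : len (Ioo a b) = b - a := by
  rcases eq_or_lt_of_le h with h' | h'
  · subst h'; simp [len_empty]
  · exact len_Ioo h'

lemma A_surjective (j : Fin m) : Function.Surjective (A L j) := by
  intro y
  exact ⟨(y - off L j) / sl L j, by
    show sl L j * ((y - off L j) / sl L j) + off L j = y
    rw [mul_div_cancel₀ _ (sl_ne L j)]; ring⟩

lemma preimage_A_nonempty (j : Fin m) {S : Set ℝ} (hS : S.Nonempty) :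
    (A L j ⁻¹' S).Nonempty := by
  obtain ⟨y, hy⟩ := hS
  obtain ⟨x, hx⟩ := A_surjective L j y
  exact ⟨x, by rw [mem_preimage, hx]; exact hy⟩

lemma len_preimage (j : Fin m) {S : Set ℝ}
    (hS : ∃ a b : ℝ, a ≤ b ∧ S = Ioo a b) :
    len (A L j ⁻¹' S) = len S / |sl L j| := by
  obtain ⟨a, b, hab, rfl⟩ := hS
  obtain ⟨e, f, hef, heq, hlen⟩ :=
    affine_preimage_Ioo (sl L j) (off L j) a b (sl_ne L j) hab
  have : A L j ⁻¹' Ioo a b = Ioo e f := heq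
  rw [this, len_Ioo' hef, hlen, len_Ioo' hab]

lemma len_I1_mul (j : Fin m) :
    len (L.I1 j) * |sl L j| = len (L.I (tgt L j)) := by
  have him : A L j ⁻¹' L.I (tgt L j) = L.I1 j := by
    rw [← A_image_eq L j, preimage_image_eq _ (A_injective L j)]
  obtain ⟨p, q, hpq, hI⟩ := L.hI (tgt L j)
  have h1 : len (L.I1 j) = len (L.I (tgt L j)) / |sl L j| := by
    rw [← him, len_preimage L j ⟨p, q, hpq.le, hI⟩]
  have hne : |sl L j| ≠ 0 := abs_ne_zero.2 (sl_ne L j)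
  rw [h1]
  field_simp

/-- index of the `I` interval containing a cylinder -/
noncomputable def hcIdx [NeZero n] : List (Fin m) → Fin n
  | [] => ⟨0, Nat.pos_of_ne_zero (NeZero.ne n)⟩
  | j :: _ => hcj L j

lemma cyl_subset_hc [NeZero n] (j : Fin m) (w : List (Fin m)) :
    cyl L (j :: w) ⊆ L.I (hcIdx L (j :: w)) :=
  (cyl_cons_subset L j w).trans (I1_subset L j)

lemma eq_of_inter_nonempty {i i' : Fin n} {S : Set ℝ} (hS : S ⊆ L.I i)
    (h : (S ∩ L.I i').Nonempty) : i = i' := by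
  by_contra hne
  obtain ⟨x, hx1, hx2⟩ := h
  exact (L.hdisj hne).ne_of_mem (hS hx1) hx2 rfl

/-- the cons-step structure: if `cyl (j :: w)` is nonempty with `w ≠ []`,
then `hcIdx w = tgt j`, `cyl (j :: w) = A j ⁻¹' cyl w`. -/
lemma cons_step [NeZero n] (j j' : Fin m) (w' : List (Fin m))
    (hne : (cyl L (j :: j' :: w')).Nonempty) :
    hcIdx L (j' :: w') = tgt L j ∧
      cyl L (j :: j' :: w') = A L j ⁻¹' (cyl L (j' :: w')) ∧
      (cyl L (j' :: w')).Nonempty := by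
  have hceq := cyl_cons_eq L j (j' :: w')
  have hint : (cyl L (j' :: w') ∩ L.I (tgt L j)).Nonempty := by
    obtain ⟨x, hx⟩ := hne
    rw [hceq] at hx
    exact ⟨A L j x, hx⟩
  have hidx : hcIdx L (j' :: w') = tgt L j :=
    eq_of_inter_nonempty L (cyl_subset_hc L j' w') hint
  have hsub : cyl L (j' :: w') ⊆ L.I (tgt L j) := by
    rw [← hidx]; exact cyl_subset_hc L j' w'
  refine ⟨hidx, ?_, hint.mono (inter_subset_left)⟩
  rw [hceq, inter_eq_self_of_subset_left hsub]

/-- KEY multiplicativity lemma -/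
lemma key [NeZero n] : ∀ (u : List (Fin m)) (j' : Fin m) (w' : List (Fin m)),
    u ≠ [] → (cyl L (u ++ j' :: w')).Nonempty →
    (cyl L u).Nonempty ∧ (cyl L (j' :: w')).Nonempty ∧
      len (cyl L (u ++ j' :: w')) * len (L.I (hcIdx L (j' :: w'))) =
        len (cyl L u) * len (cyl L (j' :: w')) := by
  intro u
  induction u with
  | nil => intro j' w' h; exact absurd rfl h
  | cons j u ih =>
      intro j' w' _ hne
      cases u with
      | nil =>
          -- u = [j]
          obtain ⟨hidx, heq, hw⟩ := cons_step L j j' w' hne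
          have hlen1 : len (cyl L (([j] : List (Fin m)) ++ j' :: w')) =
              len (cyl L (j' :: w')) / |sl L j| := by
            have : (([j] : List (Fin m)) ++ j' :: w') = j :: j' :: w' := rfl
            rw [this, heq]
            obtain ⟨a, b, hab, hrep⟩ := cyl_rep L j' w'
            rw [len_preimage L j ⟨a, b, hab, hrep⟩]
          have hcylj : cyl L [j] = L.I1 j := by
            rw [cyl_cons_eq]
            have h0 : (cyl L ([] : List (Fin m)) : Set ℝ) ∩ L.I (tgt L j)
                = L.I (tgt L j) :=
              inter_eq_self_of_subset_right (subset_iUnion _ _)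
            rw [h0, ← A_image_eq L j, preimage_image_eq _ (A_injective L j)]
          have hI1ne : (L.I1 j).Nonempty := by
            obtain ⟨a, b, hab, h⟩ := L.hI1 j
            rw [h]; exact nonempty_Ioo.2 hab
          refine ⟨by rw [hcylj]; exact hI1ne, hw, ?_⟩
          rw [hlen1, hidx, hcylj]
          have habs : |sl L j| ≠ 0 := abs_ne_zero.2 (sl_ne L j)
          rw [← len_I1_mul L j]
          field_simp
      | cons j₂ u₂ =>
          -- u = j :: j₂ :: u₂
          have hne2 : (cyl L (j :: ((j₂ :: u₂) ++ j' :: w'))).Nonempty := hne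
          obtain ⟨hidx2, heq2, hw2⟩ := cons_step L j j₂ ((u₂ ++ j' :: w'))
            (by simpa using hne2)
          obtain ⟨hu2, hw', hkey⟩ := ih j' w' (by simp) (by simpa using hw2)
          have hsub3 : cyl L (j₂ :: u₂) ⊆ L.I (tgt L j) := by
            have h4 : hcIdx L (j₂ :: u₂) = tgt L j := by
              rw [← hidx2]; rfl
            rw [← h4]; exact cyl_subset_hc L j₂ u₂
          have hne3 : (cyl L (j :: j₂ :: u₂)).Nonempty := by
            rw [cyl_cons_eq, inter_eq_self_of_subset_left hsub3]
            exact preimage_A_nonempty L j hu2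
          obtain ⟨-, heq3, -⟩ := cons_step L j j₂ u₂ hne3
          have hlenA : len (cyl L (j :: j₂ :: (u₂ ++ j' :: w'))) =
              len (cyl L (j₂ :: (u₂ ++ j' :: w'))) / |sl L j| := by
            rw [heq2]
            obtain ⟨a, b, hab, hrep⟩ := cyl_rep L j₂ (u₂ ++ j' :: w')
            exact len_preimage L j ⟨a, b, hab, hrep⟩
          have hlenB : len (cyl L (j :: j₂ :: u₂)) =
              len (cyl L (j₂ :: u₂)) / |sl L j| := by
            rw [heq3]
            obtain ⟨a, b, hab, hrep⟩ := cyl_rep L j₂ u₂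
            exact len_preimage L j ⟨a, b, hab, hrep⟩
          refine ⟨hne3, hw', ?_⟩
          have hcast : ((j :: j₂ :: u₂ : List (Fin m)) ++ j' :: w') =
              j :: j₂ :: (u₂ ++ j' :: w') := rfl
          have hcast2 : ((j₂ :: u₂ : List (Fin m)) ++ j' :: w') =
              j₂ :: (u₂ ++ j' :: w') := rfl
          rw [hcast, hlenA, hlenB]
          rw [hcast2] at hkey
          have habs : |sl L j| ≠ 0 := abs_ne_zero.2 (sl_ne L j)
          field_simp
          linarith [hkey]

end LSAux
namespace LSAux
open Set

variable {n m : ℕ} (L : LinearSystem n m)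

/-- relative length of a cylinder -/
noncomputable def rle [NeZero n] (w : List (Fin m)) : ℝ :=
  len (cyl L w) / len (L.I (hcIdx L w))

lemma len_cyl_nonneg (j : Fin m) (w : List (Fin m)) :
    0 ≤ len (cyl L (j :: w)) := by
  obtain ⟨a, b, hab, h⟩ := cyl_rep L j w
  rw [h, len_Ioo' hab]
  linarith

lemma rle_nonneg [NeZero n] (j : Fin m) (w : List (Fin m)) :
    0 ≤ rle L (j :: w) :=
  div_nonneg (len_cyl_nonneg L j w) (len_I_pos L _).le

lemma len_le_of_Ioo_subset {a b p q : ℝ} (hab : a ≤ b) (hpq : p < q)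
    (hsub : Ioo a b ⊆ Ioo p q) : b - a ≤ q - p := by
  rcases eq_or_lt_of_le hab with h | h
  · subst h; linarith
  · obtain ⟨h1, h2⟩ := (Ioo_subset_Ioo_iff h).1 hsub
    linarith

lemma len_cyl_le (j : Fin m) (w : List (Fin m)) :
    len (cyl L (j :: w)) ≤ len (L.I (hcj L j)) := by
  obtain ⟨a, b, hab, h⟩ := cyl_rep L j w
  obtain ⟨p, q, hpq, hI⟩ := L.hI (hcj L j)
  have hsub : Ioo a b ⊆ Ioo p q := by
    rw [← h, ← hI]; exact (cyl_cons_subset L j w).trans (I1_subset L j)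
  rw [h, hI, len_Ioo' hab, len_Ioo hpq]
  exact len_le_of_Ioo_subset hab hpq hsub

lemma rle_le_one [NeZero n] (j : Fin m) (w : List (Fin m)) :
    rle L (j :: w) ≤ 1 := by
  rw [rle, div_le_one (len_I_pos L _)]
  exact len_cyl_le L j w

lemma Ioo_disjoint_bound {a b a' b' p q : ℝ} (h1 : a < b) (h2 : a' < b')
    (hsub1 : Ioo a b ⊆ Ioo p q) (hsub2 : Ioo a' b' ⊆ Ioo p q)
    (hd : Disjoint (Ioo a b) (Ioo a' b')) : b - a < q - p := by
  obtain ⟨hp1, hq1⟩ := (Ioo_subset_Ioo_iff h1).1 hsub1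
  obtain ⟨hp2, hq2⟩ := (Ioo_subset_Ioo_iff h2).1 hsub2
  have hcase : b ≤ a' ∨ b' ≤ a := by
    by_contra hcon
    push_neg at hcon
    obtain ⟨hc1, hc2⟩ := hcon
    have hlt : max a a' < min b b' := by
      rcases le_total a a' with h | h <;> rcases le_total b b' with h' | h' <;>
        simp [max_def, min_def] <;> split_ifs <;> linarith
    obtain ⟨x, hx1, hx2⟩ := exists_between hlt
    have hxab : x ∈ Ioo a b := ⟨(le_max_left a a').trans_lt hx1,
      hx2.trans_le (min_le_left b b')⟩
    have hxab' : x ∈ Ioo a' b' := ⟨(le_max_right a a').trans_lt hx1,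
      hx2.trans_le (min_le_right b b')⟩
    exact hd.ne_of_mem hxab hxab' rfl
  rcases hcase with h | h
  · linarith
  · linarith

/-- strict inequality from mixing -/
lemma len_cyl_lt_of_mix [NeZero n] {N : ℕ} (hN : 1 ≤ N) (j : Fin m)
    (w : List (Fin m)) (hlen : (j :: w).length = N)
    (hne : (cyl L (j :: w)).Nonempty)
    (hmix : ¬ IsPreconnected (L.lev N ∩ L.I (hcj L j))) :
    len (cyl L (j :: w)) < len (L.I (hcj L j)) := by
  obtain ⟨a, b, hab, hrep⟩ := cyl_rep L j w
  obtain ⟨p, q, hpq, hI⟩ := L.hI (hcj L j)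
  have hablt : a < b := by
    rcases eq_or_lt_of_le hab with h | h
    · exfalso; rw [hrep, ← h] at hne; simp at hne
    · exact h
  have hsub : cyl L (j :: w) ⊆ L.lev N ∩ L.I (hcj L j) := by
    intro x hx
    exact ⟨by rw [← hlen]; exact cyl_subset_lev L (j :: w) hx,
      (cyl_cons_subset L j w).trans (I1_subset L j) hx⟩
  -- find a point of `lev N ∩ I i` outside the cylinder
  have hy : ∃ y ∈ L.lev N ∩ L.I (hcj L j), y ∉ cyl L (j :: w) := by
    by_contra hcon
    push_neg at hcon
    apply hmix
    have : L.lev N ∩ L.I (hcj L j) = cyl L (j :: w) :=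
      Subset.antisymm hcon hsub
    rw [this, hrep]
    exact isPreconnected_Ioo
  obtain ⟨y, ⟨hy1, hy2⟩, hy3⟩ := hy
  rw [lev_eq] at hy1
  obtain ⟨w₂, hw₂len, hyw₂⟩ := mem_iUnion₂.1 hy1
  cases w₂ with
  | nil => rw [List.length_nil] at hw₂len; omega
  | cons j₂ w₂' =>
      have hne2 : (j₂ :: w₂' : List (Fin m)) ≠ j :: w := by
        intro h; rw [h] at hyw₂; exact hy3 hyw₂
      have hdisj : Disjoint (cyl L (j :: w)) (cyl L (j₂ :: w₂')) :=
        cyl_disjoint L _ _ (by rw [hlen, hw₂len]) (Ne.symm hne2)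
      obtain ⟨a', b', hab', hrep'⟩ := cyl_rep L j₂ w₂'
      have hab'lt : a' < b' := by
        rcases eq_or_lt_of_le hab' with h | h
        · exfalso; rw [hrep', ← h] at hyw₂; simp at hyw₂
        · exact h
      have hidx : hcj L j₂ = hcj L j := by
        apply eq_of_inter_nonempty L
          ((cyl_cons_subset L j₂ w₂').trans (I1_subset L j₂))
        exact ⟨y, hyw₂, hy2⟩
      have hsub2 : Ioo a' b' ⊆ Ioo p q := by
        rw [← hrep', ← hI, ← hidx]
        exact (cyl_cons_subset L j₂ w₂').trans (I1_subset L j₂)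
      have hsub1 : Ioo a b ⊆ Ioo p q := by
        rw [← hrep, ← hI]
        exact (cyl_cons_subset L j w).trans (I1_subset L j)
      rw [hrep, hI, len_Ioo' hab, len_Ioo hpq]
      exact Ioo_disjoint_bound hablt hab'lt hsub1 hsub2
        (by rw [← hrep, ← hrep']; exact hdisj)

lemma hcIdx_append [NeZero n] (j : Fin m) (u w : List (Fin m)) :
    hcIdx L ((j :: u) ++ w) = hcIdx L (j :: u) := rfl

/-- decay of relative lengths -/
lemma decay [NeZero n] (N : ℕ) (hN : 1 ≤ N) (Λ : ℝ) (hΛ0 : 0 ≤ Λ)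
    (hΛ : ∀ w : List (Fin m), w.length = N → rle L w ≤ Λ) :
    ∀ k, ∀ j : Fin m, ∀ w : List (Fin m), (j :: w).length = k →
      rle L (j :: w) ≤ Λ ^ (k / N) := by
  intro k
  induction k using Nat.strong_induction_on with
  | _ k ih =>
      intro j w hlen
      by_cases hek : k < N
      · rw [Nat.div_eq_of_lt hek, pow_zero]
        exact rle_le_one L j w
      push_neg at hek
      by_cases hcyl : (cyl L (j :: w)).Nonempty
      case neg =>
        rw [not_nonempty_iff_eq_empty] at hcyl
        rw [rle, hcyl, len_empty, zero_div]
        exact pow_nonneg hΛ0 _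
      -- split off the first N letters
      have hNk : N ≤ (j :: w).length := by rw [hlen]; exact hek
      obtain ⟨u, w', hsplit, hulen⟩ :
          ∃ u w' : List (Fin m), u ++ w' = j :: w ∧ u.length = N :=
        ⟨_, _, List.take_append_drop N (j :: w),
          by rw [List.length_take]; omega⟩
      by_cases hw'e : w' = []
      · -- k = N
        have hkN : k = N := by
          have := congrArg List.length hsplit
          rw [List.length_append, hulen, hw'e, List.length_nil, hlen] at this
          omega
        rw [hkN, Nat.div_self (by omega), pow_one]
        exact hΛ (j :: w) (by rw [hlen, hkN])
      · -- k > N : use key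
        obtain ⟨j', w'', rfl⟩ := List.exists_cons_of_ne_nil hw'e
        have hune : u ≠ [] := by
          intro h; rw [h] at hulen; simp at hulen; omega
        obtain ⟨ju, u', rfl⟩ := List.exists_cons_of_ne_nil hune
        have hcyl2 : (cyl L ((ju :: u') ++ j' :: w'')).Nonempty := by
          rw [hsplit]; exact hcyl
        obtain ⟨hua, hwa, hkey⟩ := key L (ju :: u') j' w'' (by simp) hcyl2
        -- rle (j :: w) = rle u * rle w'
        have hIposu : 0 < len (L.I (hcIdx L (ju :: u'))) := len_I_pos L _
        have hIposw : 0 < len (L.I (hcIdx L (j' :: w''))) := len_I_pos L _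
        have hru : rle L ((ju :: u') ++ j' :: w'') =
            rle L (ju :: u') * rle L (j' :: w'') := by
          rw [rle, rle, rle, hcIdx_append]
          rw [div_mul_div_comm]
          rw [div_eq_div_iff (by positivity) (by positivity)]
          ring_nf
          nlinarith [hkey]
        have hrw' : rle L (j' :: w'') ≤ Λ ^ ((k - N) / N) := by
          apply ih (k - N) (by omega) j' w''
          have := congrArg List.length hsplit
          rw [List.length_append, hulen, hlen] at this
          simp at this ⊢
          omega
        have hru' : rle L (ju :: u') ≤ Λ := hΛ _ hulen
        have hq : k / N = (k - N) / N + 1 := by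
          have h1 : k = (k - N) + N := by omega
          conv_lhs => rw [h1]
          rw [Nat.add_div_right _ (by omega)]
        rw [← hsplit, hru, hq, pow_succ]
        have h0w : 0 ≤ rle L (j' :: w'') := rle_nonneg L j' w''
        calc rle L (ju :: u') * rle L (j' :: w'')
            ≤ Λ * rle L (j' :: w'') :=
              mul_le_mul_of_nonneg_right hru' h0w
          _ ≤ Λ * Λ ^ ((k - N) / N) :=
              mul_le_mul_of_nonneg_left hrw' hΛ0
          _ = Λ ^ ((k - N) / N) * Λ := mul_comm _ _

end LSAux
namespace LSAux
open Set

variable {n m : ℕ} (L : LinearSystem n m)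

lemma comp_eq_cyl (k : ℕ) (hk : 1 ≤ k) (x : ℝ) (hx : x ∈ L.lev k) :
    ∃ j : Fin m, ∃ w : List (Fin m), (j :: w).length = k ∧ x ∈ cyl L (j :: w) ∧
      connectedComponentIn (L.lev k) x = cyl L (j :: w) := by
  rw [lev_eq] at hx
  obtain ⟨w₀, hw₀len, hxw₀⟩ := mem_iUnion₂.1 hx
  cases w₀ with
  | nil => rw [List.length_nil] at hw₀len; omega
  | cons j w =>
      refine ⟨j, w, hw₀len, hxw₀, ?_⟩
      apply Subset.antisymm
      · -- component ⊆ cylinder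
        set V : Set ℝ :=
          ⋃ (w' : List (Fin m)) (_ : w'.length = k ∧ w' ≠ j :: w), cyl L w'
          with hV
        have hUopen : IsOpen (cyl L (j :: w)) := cyl_open L _
        have hVopen : IsOpen V := by
          apply isOpen_iUnion; intro w'; apply isOpen_iUnion; intro _
          exact cyl_open L _
        have hUV : Disjoint (cyl L (j :: w)) V := by
          rw [hV, disjoint_iUnion₂_right]
          intro w' hw'
          exact (cyl_disjoint L w' (j :: w) (by rw [hw'.1, hw₀len]) hw'.2).symm
        have hcover : connectedComponentIn (L.lev k) x ⊆ cyl L (j :: w) ∪ V := by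
          intro y hy
          have hy' : y ∈ L.lev k := connectedComponentIn_subset _ _ hy
          rw [lev_eq] at hy'
          obtain ⟨w', hw'len, hyw'⟩ := mem_iUnion₂.1 hy'
          by_cases hww : w' = j :: w
          · left; rw [← hww]; exact hyw'
          · right; exact mem_iUnion₂.2 ⟨w', ⟨hw'len, hww⟩, hyw'⟩
        exact (isPreconnected_connectedComponentIn).subset_left_of_subset_union
          hUopen hVopen hUV hcover
          ⟨x, mem_connectedComponentIn (by rw [lev_eq]; exact hx), hxw₀⟩
      · -- cylinder ⊆ component
        obtain ⟨a, b, hab, hrep⟩ := cyl_rep L j w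
        apply IsPreconnected.subset_connectedComponentIn _ hxw₀
        · rw [← hw₀len]; exact cyl_subset_lev L (j :: w)
        · rw [hrep]; exact isPreconnected_Ioo

end LSAux
namespace LSAux
open Set Filter

variable {n m : ℕ} (L : LinearSystem n m)

lemma lev_empty_of_n_zero (hn : n = 0) : ∀ k, L.lev k = ∅ := by
  intro k
  induction k with
  | zero =>
      rw [lev_zero, eq_empty_iff_forall_notMem]
      intro x hx
      obtain ⟨i, -⟩ := mem_iUnion.1 hx
      exact absurd i.2 (by omega)
  | succ k ih =>
      rw [lev_succ, eq_empty_iff_forall_notMem]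
      intro x hx
      rw [ih] at hx
      exact hx.2

end LSAux

open LSAux Set Filter in
theorem linearSystem_component_lengths_tendsto_zero' {n m : ℕ}
    (L : LinearSystem n m) :
    Filter.Tendsto (maxCompLength L) Filter.atTop (nhds 0) := by
  by_cases hn : n = 0
  · have h0 : maxCompLength L = fun _ => 0 := by
      funext k
      have : {r : ℝ | ∃ x ∈ L.lev k,
          r = sSup (connectedComponentIn (L.lev k) x) -
            sInf (connectedComponentIn (L.lev k) x)} = ∅ := by
        rw [eq_empty_iff_forall_notMem]
        rintro r ⟨x, hx, -⟩
        rw [lev_empty_of_n_zero L hn] at hx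
        exact hx
      rw [maxCompLength, this, Real.sSup_empty]
    rw [h0]
    exact tendsto_const_nhds
  haveI : NeZero n := ⟨hn⟩
  obtain ⟨N, hN1, hmix⟩ := L.hmix
  have hmix' : ∀ i, (L.lev N ∩ L.I i).Nonempty ∧
      ¬ IsPreconnected (L.lev N ∩ L.I i) := hmix
  by_cases hm : m = 0
  · exfalso
    obtain ⟨x, hx, -⟩ := (hmix' ⟨0, Nat.pos_of_ne_zero hn⟩).1
    obtain ⟨N', rfl⟩ : ∃ N', N = N' + 1 := ⟨N - 1, by omega⟩
    rw [lev_succ] at hx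
    obtain ⟨j, -⟩ := mem_iUnion.1 hx.1
    exact absurd j.2 (by omega)
  haveI : NeZero m := ⟨hm⟩
  haveI : Nonempty (Fin m) := ⟨⟨0, Nat.pos_of_ne_zero hm⟩⟩
  -- the contraction factor
  set Λ : ℝ := Finset.univ.sup' Finset.univ_nonempty
    (fun v : Fin N → Fin m => rle L (List.ofFn v)) with hΛdef
  have hofFn_ne : ∀ v : Fin N → Fin m, List.ofFn v ≠ [] := by
    intro v h
    have := congrArg List.length h
    rw [List.length_ofFn] at this
    simp at this
    omega
  have hΛ0 : 0 ≤ Λ := by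
    obtain ⟨j, w', hjw⟩ := List.exists_cons_of_ne_nil
      (hofFn_ne fun _ => ⟨0, Nat.pos_of_ne_zero hm⟩)
    rw [hΛdef]
    refine le_trans ?_ (Finset.le_sup'
      (fun v : Fin N → Fin m => rle L (List.ofFn v))
      (Finset.mem_univ fun _ => ⟨0, Nat.pos_of_ne_zero hm⟩))
    rw [hjw]
    exact rle_nonneg L j w' 
  have hΛ1 : Λ < 1 := by
    rw [hΛdef, Finset.sup'_lt_iff]
    intro v _
    obtain ⟨j, w', hjw⟩ := List.exists_cons_of_ne_nil (hofFn_ne v)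
    rw [hjw]
    by_cases hcyl : (cyl L (j :: w')).Nonempty
    · rw [rle, div_lt_one (len_I_pos L _)]
      exact len_cyl_lt_of_mix L hN1 j w'
        (by rw [← hjw, List.length_ofFn]) hcyl ((hmix' (hcj L j)).2)
    · rw [not_nonempty_iff_eq_empty] at hcyl
      rw [rle, hcyl, len_empty, zero_div]
      exact one_pos
  have hΛ' : ∀ w : List (Fin m), w.length = N → rle L w ≤ Λ := by
    intro w hw
    have hv : List.ofFn (fun i : Fin N => w.get (Fin.cast hw.symm i)) = w := by
      apply List.ext_getElem
      · rw [List.length_ofFn]; omega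
      · intro i h1 h2
        simp [List.getElem_ofFn]
    calc rle L w = rle L (List.ofFn fun i : Fin N => w.get (Fin.cast hw.symm i)) := by
          rw [hv]
      _ ≤ Λ := by
          rw [hΛdef]
          exact Finset.le_sup' (fun v : Fin N → Fin m => rle L (List.ofFn v))
            (Finset.mem_univ _)
  -- the maximal interval length
  set MaxI : ℝ := Finset.univ.sup' Finset.univ_nonempty
    (fun i : Fin n => len (L.I i)) with hMdef
  have hM0 : 0 < MaxI := by
    rw [hMdef]
    exact lt_of_lt_of_le (len_I_pos L ⟨0, Nat.pos_of_ne_zero hn⟩)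
      (Finset.le_sup' (fun i : Fin n => len (L.I i)) (Finset.mem_univ _))
  -- bounds for elements of the sSup set
  have hbound : ∀ k, 1 ≤ k → ∀ r ∈ {r : ℝ | ∃ x ∈ L.lev k,
      r = sSup (connectedComponentIn (L.lev k) x) -
        sInf (connectedComponentIn (L.lev k) x)},
      0 ≤ r ∧ r ≤ MaxI * Λ ^ (k / N) := by
    intro k hk r hr
    obtain ⟨x, hx, hreq⟩ := hr
    obtain ⟨j, w, hlen, hxw, hcomp⟩ := comp_eq_cyl L k hk x hx
    obtain ⟨a, b, hab, hrep⟩ := cyl_rep L j w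
    have hablt : a < b := by
      rw [hrep] at hxw
      exact hxw.1.trans hxw.2
    have hreq2 : r = len (cyl L (j :: w)) := by
      rw [hreq, hcomp, hrep, csSup_Ioo hablt, csInf_Ioo hablt, len_Ioo hablt]
    constructor
    · rw [hreq2, hrep, len_Ioo hablt]; linarith
    · have hIpos := len_I_pos L (hcIdx L (j :: w))
      have hrle : len (cyl L (j :: w)) =
          rle L (j :: w) * len (L.I (hcIdx L (j :: w))) := by
        rw [rle, div_mul_cancel₀ _ hIpos.ne']
      have h1 : rle L (j :: w) ≤ Λ ^ (k / N) :=
        decay L N hN1 Λ hΛ0 hΛ' k j w hlen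
      have h2 : len (L.I (hcIdx L (j :: w))) ≤ MaxI := by
        rw [hMdef]
        exact Finset.le_sup' (fun i : Fin n => len (L.I i)) (Finset.mem_univ _)
      rw [hreq2, hrle]
      calc rle L (j :: w) * len (L.I (hcIdx L (j :: w)))
          ≤ Λ ^ (k / N) * len (L.I (hcIdx L (j :: w))) :=
            mul_le_mul_of_nonneg_right h1 hIpos.le
        _ ≤ Λ ^ (k / N) * MaxI :=
            mul_le_mul_of_nonneg_left h2 (pow_nonneg hΛ0 _)
        _ = MaxI * Λ ^ (k / N) := mul_comm _ _
  -- squeeze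
  have htends : Tendsto (fun k : ℕ => MaxI * Λ ^ (k / N)) atTop (nhds 0) := by
    have h1 : Tendsto (fun q : ℕ => Λ ^ q) atTop (nhds 0) :=
      tendsto_pow_atTop_nhds_zero_of_lt_one hΛ0 hΛ1
    have h2 : Tendsto (fun k : ℕ => k / N) atTop atTop :=
      Filter.tendsto_atTop_atTop.2 fun b =>
        ⟨b * N, fun k hk => (Nat.le_div_iff_mul_le (by omega)).2 hk⟩
    have h3 := (h1.comp h2).const_mul MaxI
    simpa using h3
  apply tendsto_of_tendsto_of_tendsto_of_le_of_le' tendsto_const_nhds htends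
  · rw [Filter.eventually_atTop]
    refine ⟨1, fun k hk => ?_⟩
    exact Real.sSup_nonneg fun r hr => (hbound k hk r hr).1
  · rw [Filter.eventually_atTop]
    refine ⟨1, fun k hk => ?_⟩
    exact Real.sSup_le (fun r hr => (hbound k hk r hr).2)
      (mul_nonneg hM0.le (pow_nonneg hΛ0 _))

/-!
STATEMENT 8: For a linear system `σ : I¹ → I`, the supremum `L_k` of the
lengths of the connected components of `I^k` tends to `0` as `k → ∞`.
-/
theorem linearSystem_component_lengths_tendsto_zero {n m : ℕ}
    (L : LinearSystem n m) :
    Filter.Tendsto (maxCompLength L) Filter.atTop (nhds 0) :=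
  linearSystem_component_lengths_tendsto_zero' L
end

section
/- Let σ : I¹ → I be a linear system. For x ∈ J_σ and k ≥ 1, let I^k(x) denote the connected component of I^k containing x. Then ⋂_{k≥1} I^k(x) = {x}. Consequently, distinct points of J_σ have distinct itineraries: if x, y ∈ J_σ with x ≠ y, then there exists k ≥ 0 such that σ^k(x) and σ^k(y) lie in different components I¹_j of I¹. -/
/-!
STATEMENT 9: For a linear system `σ : I¹ → I` and `x ∈ J_σ`, the components
`I^k(x)` of `I^k` containing `x` satisfy `⋂_{k≥1} I^k(x) = {x}`.  Consequently
distinct points of `J_σ` have distinct itineraries: if `x ≠ y` in `J_σ`, then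
for some `k ≥ 0` the points `σ^k(x)` and `σ^k(y)` lie in different components
`I¹ⱼ` of `I¹`.
-/
open Set Metric Bornology Filter

namespace LinearSystem

variable {n m : ℕ} (L : LinearSystem n m)

lemma lev_zero : L.lev 0 = ⋃ i, L.I i := rfl

lemma mem_lev_succ {x : ℝ} {k : ℕ} :
    x ∈ L.lev (k + 1) ↔ x ∈ (⋃ j, L.I1 j) ∧ L.σ x ∈ L.lev k := Iff.rfl

lemma isOpen_I (i : Fin n) : IsOpen (L.I i) := by
  obtain ⟨a, b, _, h⟩ := L.hI i; rw [h]; exact isOpen_Ioo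

lemma isOpen_I1 (j : Fin m) : IsOpen (L.I1 j) := by
  obtain ⟨a, b, _, h⟩ := L.hI1 j; rw [h]; exact isOpen_Ioo

lemma isPreconnected_I (i : Fin n) : IsPreconnected (L.I i) := by
  obtain ⟨a, b, _, h⟩ := L.hI i; rw [h]; exact isPreconnected_Ioo

lemma I1_subset : (⋃ j, L.I1 j) ⊆ ⋃ i, L.I i := by
  refine iUnion_subset fun j => ?_
  obtain ⟨i, hi⟩ := L.hsub j
  exact hi.trans (subset_iUnion _ i)

lemma lev_succ_subset : ∀ k, L.lev (k + 1) ⊆ L.lev k := by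
  intro k
  induction k with
  | zero => exact fun x hx => L.I1_subset hx.1
  | succ k ih => exact fun x hx => ⟨hx.1, ih hx.2⟩

lemma lev_subset_zero : ∀ k, L.lev k ⊆ L.lev 0 := by
  intro k
  induction k with
  | zero => exact subset_rfl
  | succ k ih => exact (L.lev_succ_subset k).trans ih

lemma lev_add_subset (k t : ℕ) : L.lev (k + t) ⊆ L.lev k := by
  induction t with
  | zero => exact subset_rfl
  | succ t ih => exact (L.lev_succ_subset (k + t)).trans ih

lemma isOpen_lev : ∀ k, IsOpen (L.lev k) := by
  intro k
  induction k with
  | zero => exact isOpen_iUnion L.isOpen_I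
  | succ k ih =>
    have : L.lev (k + 1) = ⋃ j, {x | x ∈ L.I1 j ∧ L.σ x ∈ L.lev k} := by
      ext x
      simp only [mem_lev_succ, mem_iUnion, Set.mem_setOf_eq]
      tauto
    rw [this]
    refine isOpen_iUnion fun j => ?_
    obtain ⟨i, a, b, ha, haf, him⟩ := L.haff j
    have heq : {x | x ∈ L.I1 j ∧ L.σ x ∈ L.lev k}
        = L.I1 j ∩ (fun x => a * x + b) ⁻¹' (L.lev k) := by
      ext x
      simp only [Set.mem_setOf_eq, mem_inter_iff, mem_preimage]
      constructor
      · rintro ⟨h1, h2⟩; exact ⟨h1, by rwa [haf x h1] at h2⟩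
      · rintro ⟨h1, h2⟩; exact ⟨h1, by rwa [haf x h1]⟩
    rw [heq]
    exact (L.isOpen_I1 j).inter (ih.preimage (by fun_prop))

lemma isBounded_lev_zero : IsBounded (L.lev 0) := by
  rw [lev_zero]
  refine isBounded_iUnion.2 fun i => ?_
  obtain ⟨a, b, _, h⟩ := L.hI i
  rw [h]; exact isBounded_Ioo a b

lemma mem_lev_of_julia {x : ℝ} (hx : x ∈ L.julia) : ∀ k, x ∈ L.lev k := by
  intro k
  cases k with
  | zero => exact L.lev_subset_zero 1 (Set.mem_iInter.1 hx 0)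
  | succ k => exact Set.mem_iInter.1 hx k

lemma julia_sigma {x : ℝ} (hx : x ∈ L.julia) : L.σ x ∈ L.julia := by
  refine Set.mem_iInter.2 fun k => ?_
  exact (Set.mem_iInter.1 hx (k + 1)).2

lemma julia_iterate {x : ℝ} (hx : x ∈ L.julia) : ∀ k, L.σ^[k] x ∈ L.julia := by
  intro k
  induction k with
  | zero => exact hx
  | succ k ih => rw [Function.iterate_succ_apply']; exact L.julia_sigma ih

/-- a preconnected subset of a disjoint union of open sets lies in one piece -/
lemma preconn_subset_piece {ι : Type*} {f : ι → Set ℝ}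
    (hop : ∀ j, IsOpen (f j)) (hdisj : Pairwise fun j j' => Disjoint (f j) (f j'))
    {S : Set ℝ} (hS : IsPreconnected S) (hsub : S ⊆ ⋃ j, f j)
    {j : ι} {z : ℝ} (hz : z ∈ S) (hzj : z ∈ f j) : S ⊆ f j := by
  refine hS.subset_left_of_subset_union (hop j)
    (isOpen_iUnion fun j' : {j' // j' ≠ j} => hop j') ?_ ?_ ⟨z, hz, hzj⟩
  · refine Set.disjoint_left.2 fun x hxj hx => ?_
    obtain ⟨j', hj'⟩ := mem_iUnion.1 hx
    exact Set.disjoint_left.1 (hdisj j'.2) hj' hxj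
  · intro x hx
    obtain ⟨j', hj'⟩ := mem_iUnion.1 (hsub hx)
    by_cases h : j' = j
    · exact Or.inl (h ▸ hj')
    · exact Or.inr (mem_iUnion.2 ⟨⟨j', h⟩, hj'⟩)

lemma cc_zero {z : ℝ} {i : Fin n} (hz : z ∈ L.I i) :
    connectedComponentIn (L.lev 0) z = L.I i := by
  apply Set.Subset.antisymm
  · exact preconn_subset_piece L.isOpen_I L.hdisj isPreconnected_connectedComponentIn
      (connectedComponentIn_subset _ _)
      (mem_connectedComponentIn (L.lev_zero ▸ mem_iUnion.2 ⟨i, hz⟩)) hz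
  · exact (L.isPreconnected_I i).subset_connectedComponentIn hz
      (L.lev_zero ▸ subset_iUnion _ i)


lemma cc_subset_I1 {x : ℝ} {k : ℕ} {j : Fin m} (hx : x ∈ L.lev (k + 1))
    (hxj : x ∈ L.I1 j) : connectedComponentIn (L.lev (k + 1)) x ⊆ L.I1 j :=
  preconn_subset_piece L.isOpen_I1 L.hdisj1 isPreconnected_connectedComponentIn
    ((connectedComponentIn_subset _ _).trans fun z hz => hz.1)
    (mem_connectedComponentIn hx) hxj

lemma forward {x : ℝ} {k : ℕ} (hx : x ∈ L.lev (k + 1)) :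
    L.σ '' connectedComponentIn (L.lev (k + 1)) x
      ⊆ connectedComponentIn (L.lev k) (L.σ x) := by
  obtain ⟨j, hj⟩ := mem_iUnion.1 hx.1
  set C := connectedComponentIn (L.lev (k + 1)) x with hC
  have hC1 : C ⊆ L.I1 j := L.cc_subset_I1 hx hj
  obtain ⟨i, a, b, ha, haf, him⟩ := L.haff j
  have himg : L.σ '' C = (fun y => a * y + b) '' C :=
    Set.image_congr fun y hy => haf y (hC1 hy)
  have hpre : IsPreconnected (L.σ '' C) := by
    rw [himg]
    exact isPreconnected_connectedComponentIn.image _ (by fun_prop)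
  refine hpre.subset_connectedComponentIn ?_ ?_
  · exact ⟨x, mem_connectedComponentIn hx, rfl⟩
  · rintro z ⟨y, hy, rfl⟩
    exact (connectedComponentIn_subset _ _ hy).2

lemma backward {x y : ℝ} {k : ℕ} {j : Fin m} {i : Fin n} {a b : ℝ}
    (ha : a ≠ 0) (haf : ∀ z ∈ L.I1 j, L.σ z = a * z + b)
    (him : L.σ '' L.I1 j = L.I i)
    (hxj : x ∈ L.I1 j) (hσx : L.σ x ∈ L.lev k)
    (hyj : y ∈ L.I1 j)
    (hσy : L.σ y ∈ connectedComponentIn (L.lev k) (L.σ x)) :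
    y ∈ connectedComponentIn (L.lev (k + 1)) x := by
  set g : ℝ → ℝ := fun z => (z - b) / a with hg
  have hginv : ∀ z ∈ L.I i, g z ∈ L.I1 j ∧ L.σ (g z) = z := by
    intro z hz
    rw [← him] at hz
    obtain ⟨w, hw, hwz⟩ := hz
    have : w = g z := by
      rw [haf w hw] at hwz
      rw [← hwz]; show w = (a * w + b - b) / a
      rw [add_sub_cancel_right, mul_div_cancel_left₀ _ ha]
    rw [← this]
    exact ⟨hw, hwz⟩
  have hgx : g (L.σ x) = x := by
    rw [haf x hxj]; show (a * x + b - b) / a = x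
    rw [add_sub_cancel_right, mul_div_cancel_left₀ _ ha]
  have hgy : g (L.σ y) = y := by
    rw [haf y hyj]; show (a * y + b - b) / a = y
    rw [add_sub_cancel_right, mul_div_cancel_left₀ _ ha]
  set D := connectedComponentIn (L.lev k) (L.σ x) with hD
  have hDI : D ⊆ L.I i := by
    have hσxi : L.σ x ∈ L.I i := him ▸ ⟨x, hxj, rfl⟩
    exact preconn_subset_piece L.isOpen_I L.hdisj isPreconnected_connectedComponentIn
      ((connectedComponentIn_subset _ _).trans (L.lev_subset_zero k))
      (mem_connectedComponentIn hσx) hσxi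
  have hSsub : g '' D ⊆ L.lev (k + 1) := by
    rintro z ⟨u, hu, rfl⟩
    refine ⟨mem_iUnion.2 ⟨j, (hginv u (hDI hu)).1⟩, ?_⟩
    rw [(hginv u (hDI hu)).2]
    exact connectedComponentIn_subset _ _ hu
  have hSpre : IsPreconnected (g '' D) :=
    isPreconnected_connectedComponentIn.image _ (by fun_prop)
  have hxS : x ∈ g '' D := ⟨L.σ x, mem_connectedComponentIn hσx, hgx⟩
  have : g '' D ⊆ connectedComponentIn (L.lev (k + 1)) x :=
    hSpre.subset_connectedComponentIn hxS hSsub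
  exact this ⟨L.σ y, hσy, hgy⟩

lemma forward_iter {x : ℝ} (hx : x ∈ L.julia) :
    ∀ k t, L.σ^[k] '' connectedComponentIn (L.lev (k + t)) x
      ⊆ connectedComponentIn (L.lev t) (L.σ^[k] x) := by
  intro k
  induction k generalizing x with
  | zero => intro t; simp
  | succ k ih =>
    intro t
    have h1 : L.σ '' connectedComponentIn (L.lev (k + 1 + t)) x
        ⊆ connectedComponentIn (L.lev (k + t)) (L.σ x) := by
      have : k + 1 + t = (k + t) + 1 := by omega
      rw [this]
      exact L.forward (this ▸ L.mem_lev_of_julia hx (k + 1 + t))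
    have h2 := ih (L.julia_sigma hx) t
    calc L.σ^[k + 1] '' connectedComponentIn (L.lev (k + 1 + t)) x
        = L.σ^[k] '' (L.σ '' connectedComponentIn (L.lev (k + 1 + t)) x) := by
          rw [Set.image_image]
          exact Set.image_congr fun y _ => (Function.iterate_succ_apply L.σ k y)
      _ ⊆ L.σ^[k] '' connectedComponentIn (L.lev (k + t)) (L.σ x) :=
          Set.image_mono h1
      _ ⊆ connectedComponentIn (L.lev t) (L.σ^[k] (L.σ x)) := h2
      _ = connectedComponentIn (L.lev t) (L.σ^[k + 1] x) := by
          rw [Function.iterate_succ_apply]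

lemma affine_iter {x : ℝ} (hx : x ∈ L.julia) :
    ∀ k, ∃ a b : ℝ, a ≠ 0 ∧
      (∀ y ∈ connectedComponentIn (L.lev k) x, L.σ^[k] y = a * y + b) ∧
      L.σ^[k] '' connectedComponentIn (L.lev k) x
        = connectedComponentIn (L.lev 0) (L.σ^[k] x) := by
  intro k
  induction k generalizing x with
  | zero => exact ⟨1, 0, one_ne_zero, fun y _ => by simp, by simp⟩
  | succ k ih =>
    have hx1 : x ∈ L.lev (k + 1) := L.mem_lev_of_julia hx (k + 1)
    obtain ⟨j, hj⟩ := mem_iUnion.1 hx1.1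
    obtain ⟨i, a, b, ha, haf, him⟩ := L.haff j
    set C := connectedComponentIn (L.lev (k + 1)) x with hCdef
    have hC1 : C ⊆ L.I1 j := L.cc_subset_I1 hx1 hj
    obtain ⟨a', b', ha', haf', him'⟩ := ih (L.julia_sigma hx)
    set D := connectedComponentIn (L.lev k) (L.σ x) with hDdef
    have himCD : L.σ '' C = D := by
      apply Set.Subset.antisymm (L.forward hx1)
      intro z hz
      have hzI : z ∈ L.I i := by
        have hσxi : L.σ x ∈ L.I i := him ▸ ⟨x, hj, rfl⟩
        exact preconn_subset_piece L.isOpen_I L.hdisj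
          isPreconnected_connectedComponentIn
          ((connectedComponentIn_subset _ _).trans (L.lev_subset_zero k))
          (mem_connectedComponentIn hx1.2) hσxi hz
      rw [← him] at hzI
      obtain ⟨w, hw, hwz⟩ := hzI
      have hwC : w ∈ C :=
        L.backward ha haf him hj hx1.2 hw (hwz ▸ hz)
      exact ⟨w, hwC, hwz⟩
    refine ⟨a' * a, a' * b + b', mul_ne_zero ha' ha, ?_, ?_⟩
    · intro y hy
      have hσy : L.σ y ∈ D := himCD ▸ ⟨y, hy, rfl⟩
      rw [Function.iterate_succ_apply, haf' _ hσy, haf y (hC1 hy)]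
      ring
    · calc L.σ^[k + 1] '' C = L.σ^[k] '' (L.σ '' C) := by
            rw [Set.image_image]
            exact Set.image_congr fun y _ => (Function.iterate_succ_apply L.σ k y)
        _ = connectedComponentIn (L.lev 0) (L.σ^[k] (L.σ x)) := by rw [himCD, him']
        _ = connectedComponentIn (L.lev 0) (L.σ^[k + 1] x) := by
            rw [Function.iterate_succ_apply]


private lemma le_of_forall_pos_le_add' {a b : ℝ} (h : ∀ ε > 0, a ≤ b + ε) : a ≤ b := by
  by_contra hc
  push_neg at hc
  have := h ((a - b) / 2) (by linarith)
  linarith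

end LinearSystem

open Set Metric Bornology Filter LinearSystem

theorem linearSystem_itinerary_separates {n m : ℕ} (L : LinearSystem n m) :
    (∀ x ∈ L.julia,
      (⋂ k : ℕ, connectedComponentIn (L.lev (k + 1)) x) = {x}) ∧
    (∀ x ∈ L.julia, ∀ y ∈ L.julia, x ≠ y →
      ∃ (k : ℕ) (j j' : Fin m), j ≠ j' ∧
        L.σ^[k] x ∈ L.I1 j ∧ L.σ^[k] y ∈ L.I1 j') := by
  classical
  -- endpoints of the intervals I i
  obtain ⟨A, B, hAB⟩ : ∃ A B : Fin n → ℝ, ∀ i, A i < B i ∧ L.I i = Set.Ioo (A i) (B i) := by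
    choose A B h1 h2 using L.hI
    exact ⟨A, B, fun i => ⟨h1 i, h2 i⟩⟩
  -- mixing data
  obtain ⟨N, hN1, hmixN⟩ := L.hmix
  have hw : ∀ i, ∃ w ∈ L.I i, w ∉ L.lev N := by
    intro i
    have h2 : ¬ IsPreconnected (L.lev N ∩ L.I i) := (hmixN i).2
    rw [isPreconnected_iff_ordConnected, Set.ordConnected_iff] at h2
    push_neg at h2
    obtain ⟨u, hu, v, hv, huv, hnsub⟩ := h2
    obtain ⟨w, hw1, hw2⟩ := Set.not_subset.1 hnsub
    have hwI : w ∈ L.I i := by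
      rw [(hAB i).2] at hu hv ⊢
      exact ⟨lt_of_lt_of_le hu.2.1 hw1.1, lt_of_le_of_lt hw1.2 hv.2.2⟩
    exact ⟨w, hwI, fun hc => hw2 ⟨hc, hwI⟩⟩
  choose w hwI hwN using hw
  have hwAB : ∀ i, A i < w i ∧ w i < B i := by
    intro i
    have := hwI i
    rw [(hAB i).2] at this
    exact ⟨this.1, this.2⟩
  -- part 1
  have part1 : ∀ x ∈ L.julia,
      (⋂ k : ℕ, connectedComponentIn (L.lev (k + 1)) x) = {x} := by
    intro x hx
    have hxlev : ∀ k, x ∈ L.lev k := L.mem_lev_of_julia hx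
    -- n is nonempty since x ∈ lev 0
    obtain ⟨i0, hi0⟩ := mem_iUnion.1 (L.lev_zero ▸ hxlev 0)
    have hune : (Finset.univ : Finset (Fin n)).Nonempty := ⟨i0, Finset.mem_univ _⟩
    set μ : Fin n → ℝ := fun i => max (w i - A i) (B i - w i) with hμdef
    have hμpos : ∀ i, 0 < μ i := fun i =>
      lt_of_lt_of_le (by linarith [(hwAB i).1]) (le_max_left _ _)
    have hμlt : ∀ i, μ i < B i - A i := fun i =>
      max_lt (by linarith [(hwAB i).2]) (by linarith [(hwAB i).1])
    set Λ : ℝ := Finset.univ.sup' hune (fun i => μ i / (B i - A i)) with hΛdef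
    have hΛlt1 : Λ < 1 := by
      rw [hΛdef, Finset.sup'_lt_iff]
      intro i _
      rw [div_lt_one (by linarith [(hAB i).1])]
      exact hμlt i
    have hΛge : ∀ i, μ i / (B i - A i) ≤ Λ := by
      intro i
      rw [hΛdef]
      exact Finset.le_sup' (fun i => μ i / (B i - A i)) (Finset.mem_univ i)
    have hΛ0 : 0 ≤ Λ :=
      le_trans (le_of_lt (div_pos (hμpos i0) (by linarith [(hAB i0).1]))) (hΛge i0)
    -- boundedness
    have hbd : ∀ k, IsBounded (connectedComponentIn (L.lev k) x) := fun k =>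
      L.isBounded_lev_zero.subset
        ((connectedComponentIn_subset _ _).trans (L.lev_subset_zero k))
    -- key contraction
    have key : ∀ z ∈ L.julia, ∀ k,
        Metric.diam (connectedComponentIn (L.lev (k + N)) z)
          ≤ Λ * Metric.diam (connectedComponentIn (L.lev k) z) := by
      intro z hz k
      obtain ⟨a, b, ha, haf, him⟩ := L.affine_iter hz k
      set C := connectedComponentIn (L.lev k) z with hCdef
      set C' := connectedComponentIn (L.lev (k + N)) z with hC'def
      have hC'C : C' ⊆ C := connectedComponentIn_mono z (L.lev_add_subset k N)
      set z' := L.σ^[k] z with hz'def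
      have hz'j : z' ∈ L.julia := L.julia_iterate hz k
      obtain ⟨i, hi⟩ := mem_iUnion.1 (L.lev_zero ▸ L.mem_lev_of_julia hz'j 0)
      have himI : L.σ^[k] '' C = L.I i := by rw [him, L.cc_zero hi]
      set E := connectedComponentIn (L.lev N) z' with hEdef
      have hEI : E ⊆ L.I i :=
        preconn_subset_piece L.isOpen_I L.hdisj isPreconnected_connectedComponentIn
          ((connectedComponentIn_subset _ _).trans (L.lev_subset_zero N))
          (mem_connectedComponentIn (L.mem_lev_of_julia hz'j N)) hi
      have hwE : w i ∉ E := fun hc => hwN i (connectedComponentIn_subset _ _ hc)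
      have hEord : OrdConnected E := isPreconnected_connectedComponentIn.ordConnected
      -- diameter bound on E
      have hEdiam : ∀ p ∈ E, ∀ q ∈ E, dist p q ≤ μ i := by
        have hside : ∀ p ∈ E, ∀ q ∈ E, p ≤ q → q - p ≤ μ i := by
          intro p hp q hq hpq
          have hpI := hEI hp; have hqI := hEI hq
          rw [(hAB i).2] at hpI hqI
          by_cases hle : q ≤ w i
          · exact le_trans (by linarith [hpI.1]) (le_max_left _ _)
          · push_neg at hle
            have hwp : w i ≤ p := by
              by_contra hc
              push_neg at hc
              exact hwE (hEord.out hp hq ⟨le_of_lt hc, le_of_lt hle⟩)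
            exact le_trans (by linarith [hqI.2]) (le_max_right _ _)
        intro p hp q hq
        rcases le_total p q with h | h
        · rw [Real.dist_eq, abs_of_nonpos (by linarith)]
          simpa using hside p hp q hq h
        · rw [Real.dist_eq, abs_of_nonneg (by linarith)]
          exact hside q hq p hp h
      -- σ^[k] maps C' into E
      have hC'E : L.σ^[k] '' C' ⊆ E := L.forward_iter hz k N
      -- upper bound for diam C'
      have hup : Metric.diam C' ≤ μ i / |a| := by
        refine Metric.diam_le_of_forall_dist_le
          (le_of_lt (div_pos (hμpos i) (abs_pos.2 ha))) ?_
        intro p hp q hq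
        have h1 : dist (L.σ^[k] p) (L.σ^[k] q) ≤ μ i :=
          hEdiam _ (hC'E ⟨p, hp, rfl⟩) _ (hC'E ⟨q, hq, rfl⟩)
        rw [haf p (hC'C hp), haf q (hC'C hq), Real.dist_eq] at h1
        have h2 : a * p + b - (a * q + b) = a * (p - q) := by ring
        rw [h2, abs_mul] at h1
        rw [Real.dist_eq, le_div_iff₀ (abs_pos.2 ha)]
        linarith [h1]
      -- lower bound for diam C
      have hlow : (B i - A i) / |a| ≤ Metric.diam C := by
        apply le_of_forall_pos_le_add'
        intro ε hε
        set δ := min (ε * |a| / 2) ((B i - A i) / 4) with hδdef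
        have hδpos : 0 < δ :=
          lt_min (by positivity) (by linarith [(hAB i).1])
        have hδle : δ ≤ ε * |a| / 2 := min_le_left _ _
        have hδlt : δ ≤ (B i - A i) / 4 := min_le_right _ _
        have hu : A i + δ ∈ L.I i := by
          rw [(hAB i).2]; constructor <;> [linarith; linarith [(hAB i).1]]
        have hv : B i - δ ∈ L.I i := by
          rw [(hAB i).2]; constructor <;> [linarith [(hAB i).1]; linarith]
        rw [← himI] at hu hv
        obtain ⟨p, hp, hpu⟩ := hu
        obtain ⟨q, hq, hqv⟩ := hv
        have hd : dist p q ≤ Metric.diam C :=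
          dist_le_diam_of_mem (L.isBounded_lev_zero.subset
            ((connectedComponentIn_subset _ _).trans (L.lev_subset_zero k))) hp hq
        have h1 : dist (L.σ^[k] p) (L.σ^[k] q) = |a| * dist p q := by
          rw [haf p hp, haf q hq, Real.dist_eq, Real.dist_eq]
          have : a * p + b - (a * q + b) = a * (p - q) := by ring
          rw [this, abs_mul]
        have h2 : dist (L.σ^[k] p) (L.σ^[k] q) = B i - A i - 2 * δ := by
          rw [hpu, hqv, Real.dist_eq, abs_of_nonpos (by linarith)]
          ring
        have h3 : B i - A i - 2 * δ ≤ |a| * Metric.diam C := by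
          rw [← h2, h1]
          exact mul_le_mul_of_nonneg_left hd (abs_nonneg a)
        rw [div_le_iff₀ (abs_pos.2 ha)]
        have : ε * |a| ≥ 2 * δ := by linarith
        calc B i - A i ≤ |a| * Metric.diam C + 2 * δ := by linarith
          _ ≤ |a| * Metric.diam C + ε * |a| := by linarith
          _ = (Metric.diam C + ε) * |a| := by ring
      -- combine
      calc Metric.diam C' ≤ μ i / |a| := hup
        _ ≤ Λ * ((B i - A i) / |a|) := by
            rw [div_le_iff₀ (abs_pos.2 ha)]
            have h1 : μ i ≤ Λ * (B i - A i) := by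
              rw [← div_le_iff₀ (by linarith [(hAB i).1] : (0:ℝ) < B i - A i)] at *
              exact hΛge i
            calc μ i ≤ Λ * (B i - A i) := h1
              _ = Λ * ((B i - A i) / |a|) * |a| := by
                  field_simp
        _ ≤ Λ * Metric.diam C := mul_le_mul_of_nonneg_left hlow hΛ0
    -- iterate the contraction
    have iterdiam : ∀ t : ℕ,
        Metric.diam (connectedComponentIn (L.lev (t * N + 1)) x)
          ≤ Λ ^ t * Metric.diam (connectedComponentIn (L.lev 1) x) := by
      intro t
      induction t with
      | zero => simp
      | succ t ih =>
        have harith : (t + 1) * N + 1 = (t * N + 1) + N := by ring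
        rw [harith]
        calc Metric.diam (connectedComponentIn (L.lev ((t * N + 1) + N)) x)
            ≤ Λ * Metric.diam (connectedComponentIn (L.lev (t * N + 1)) x) :=
              key x hx (t * N + 1)
          _ ≤ Λ * (Λ ^ t * Metric.diam (connectedComponentIn (L.lev 1) x)) :=
              mul_le_mul_of_nonneg_left ih hΛ0
          _ = Λ ^ (t + 1) * Metric.diam (connectedComponentIn (L.lev 1) x) := by
              ring
    -- conclude
    refine Set.eq_singleton_iff_unique_mem.2 ⟨Set.mem_iInter.2 fun k =>
      mem_connectedComponentIn (hxlev (k + 1)), ?_⟩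
    intro y hy
    have hdist : ∀ t : ℕ, dist y x
        ≤ Λ ^ t * Metric.diam (connectedComponentIn (L.lev 1) x) := by
      intro t
      have hyt : y ∈ connectedComponentIn (L.lev (t * N + 1)) x :=
        Set.mem_iInter.1 hy (t * N)
      have hxt : x ∈ connectedComponentIn (L.lev (t * N + 1)) x :=
        mem_connectedComponentIn (hxlev (t * N + 1))
      exact le_trans (dist_le_diam_of_mem (hbd (t * N + 1)) hyt hxt) (iterdiam t)
    have htend : Tendsto (fun t : ℕ =>
        Λ ^ t * Metric.diam (connectedComponentIn (L.lev 1) x)) atTop (nhds 0) := by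
      have := (tendsto_pow_atTop_nhds_zero_of_lt_one hΛ0 hΛlt1).mul_const
        (Metric.diam (connectedComponentIn (L.lev 1) x))
      simpa using this
    exact dist_le_zero.1 (ge_of_tendsto' htend hdist)
  refine ⟨part1, ?_⟩
  intro x hx y hy hxy
  by_contra hcon
  push_neg at hcon
  have hsame : ∀ k (j j' : Fin m), L.σ^[k] x ∈ L.I1 j → L.σ^[k] y ∈ L.I1 j' →
      j = j' := by
    intro k j j' hxj hyj'
    by_contra hne
    exact hcon k j j' hne hxj hyj'
  have claim : ∀ k, ∀ z u : ℝ, z ∈ L.julia → u ∈ L.julia →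
      (∀ t (j j' : Fin m), L.σ^[t] z ∈ L.I1 j → L.σ^[t] u ∈ L.I1 j' → j = j') →
      u ∈ connectedComponentIn (L.lev k) z := by
    intro k
    induction k with
    | zero =>
      intro z u hz hu hit
      obtain ⟨j, hj⟩ := mem_iUnion.1 (L.mem_lev_of_julia hz 1).1
      obtain ⟨j', hj'⟩ := mem_iUnion.1 (L.mem_lev_of_julia hu 1).1
      have hjj : j = j' := hit 0 j j' (by simpa using hj) (by simpa using hj')
      subst hjj
      obtain ⟨i, hi⟩ := L.hsub j
      exact (L.isPreconnected_I i).subset_connectedComponentIn (hi hj)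
        (L.lev_zero ▸ subset_iUnion _ i) (hi hj')
    | succ k ih =>
      intro z u hz hu hit
      obtain ⟨j, hj⟩ := mem_iUnion.1 (L.mem_lev_of_julia hz 1).1
      obtain ⟨j', hj'⟩ := mem_iUnion.1 (L.mem_lev_of_julia hu 1).1
      have hjj : j = j' := hit 0 j j' (by simpa using hj) (by simpa using hj')
      subst hjj
      have hit' : ∀ t (p p' : Fin m), L.σ^[t] (L.σ z) ∈ L.I1 p →
          L.σ^[t] (L.σ u) ∈ L.I1 p' → p = p' := by
        intro t p p' h1 h2
        refine hit (t + 1) p p' ?_ ?_ <;>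
          rwa [Function.iterate_succ_apply]
      have hσu : L.σ u ∈ connectedComponentIn (L.lev k) (L.σ z) :=
        ih (L.σ z) (L.σ u) (L.julia_sigma hz) (L.julia_sigma hu) hit'
      obtain ⟨i, a, b, ha, haf, him⟩ := L.haff j
      exact L.backward ha haf him hj (L.mem_lev_of_julia (L.julia_sigma hz) k)
        hj' hσu
  have hyx : y ∈ (⋂ k : ℕ, connectedComponentIn (L.lev (k + 1)) x) :=
    Set.mem_iInter.2 fun k => claim (k + 1) x y hx hy hsame
  rw [part1 x hx] at hyx
  exact hxy (hyx.symm)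
end

section
/- Let σ : I¹ → I be a linear system and let x ∈ J_σ be a wandering point, i.e., the points σ^k(x), k ≥ 0, are pairwise distinct. Then the ω-limit set of x — the set of all y ∈ ℝ such that σ^{k_t}(x) → y for some sequence of integers k_t → ∞ — is an infinite set. -/
open Set Filter Metric

private lemma image_affine_Ioo_neg {a : ℝ} (ha : a < 0) (b c d : ℝ) :
    (fun z => a * z + b) '' Set.Ioo c d = Set.Ioo (a * d + b) (a * c + b) := by
  have hcomp : (fun z : ℝ => a * z + b) = (fun w : ℝ => (-a) * w + b) ∘ (fun z : ℝ => -z) := by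
    funext z; simp only [Function.comp_apply]; ring
  rw [hcomp, Set.image_comp, Set.image_neg_Ioo,
    Set.image_affine_Ioo (by linarith : (0:ℝ) < -a)]
  ring_nf

private lemma Ioo_eq_Ioo {A B C D : ℝ} (hAB : A < B) (h : Set.Ioo A B = Set.Ioo C D) :
    A = C ∧ B = D := by
  have hCD : C < D := by
    obtain ⟨z, hz⟩ := Set.nonempty_Ioo.2 hAB
    rw [h] at hz; exact hz.1.trans hz.2
  constructor
  · rw [← csInf_Ioo hAB, ← csInf_Ioo hCD, h]
  · rw [← csSup_Ioo hAB, ← csSup_Ioo hCD, h]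

private lemma Ioo_subset_len {A B C D : ℝ} (hAB : A < B) (h : Set.Ioo A B ⊆ Set.Ioo C D) :
    B - A ≤ D - C := by
  have hne : (Set.Ioo A B).Nonempty := Set.nonempty_Ioo.2 hAB
  have hCD : C < D := by
    obtain ⟨z, hz⟩ := hne
    have := h hz; exact this.1.trans this.2
  have h1 : C ≤ A := by
    have := csInf_le_csInf bddBelow_Ioo hne h
    rwa [csInf_Ioo hAB, csInf_Ioo hCD] at this
  have h2 : B ≤ D := by
    have := csSup_le_csSup bddAbove_Ioo hne h
    rwa [csSup_Ioo hAB, csSup_Ioo hCD] at this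
  linarith

private lemma eventually_fiber_infinite {α : Type*} (f : ℕ → α) (h : (Set.range f).Finite) :
    ∃ K : ℕ, ∀ k, K ≤ k → {k' : ℕ | f k' = f k}.Infinite := by
  have hBad : {k : ℕ | ¬ {k' : ℕ | f k' = f k}.Infinite}.Finite := by
    have hsub : {k : ℕ | ¬ {k' : ℕ | f k' = f k}.Infinite} ⊆
        ⋃ q ∈ {q ∈ Set.range f | (f ⁻¹' {q}).Finite}, f ⁻¹' {q} := by
      intro k hk
      simp only [Set.mem_setOf_eq, Set.not_infinite] at hk
      refine Set.mem_biUnion ⟨⟨k, rfl⟩, ?_⟩ rfl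
      convert hk using 1
      rfl
    refine Set.Finite.subset (Set.Finite.biUnion (h.subset (Set.sep_subset _ _)) ?_) hsub
    intro q hq; exact hq.2
  obtain ⟨K, hK⟩ := hBad.bddAbove
  refine ⟨K + 1, fun k hk => ?_⟩
  by_contra hcon
  have := hK hcon
  omega

/-!
STATEMENT 12 (Proposition 3.6): Let `σ : I¹ → I` be a linear system and
`x ∈ J_σ` a wandering point (the iterates `σ^k(x)` are pairwise distinct).
Then the ω-limit set of `x` — all `y ∈ ℝ` with `σ^{k_t}(x) → y` for some
sequence of integers `k_t → ∞` — is infinite.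
-/
theorem linearSystem_omega_limit_infinite {n m : ℕ} (L : LinearSystem n m)
    (x : ℝ) (hx : x ∈ L.julia)
    (hwandering : Function.Injective fun k : ℕ => L.σ^[k] x) :
    {y : ℝ | ∃ φ : ℕ → ℕ, Filter.Tendsto φ Filter.atTop Filter.atTop ∧
      Filter.Tendsto (fun t => L.σ^[φ t] x) Filter.atTop (nhds y)}.Infinite := by
  classical
  set f : ℕ → ℝ := fun k => L.σ^[k] x with hf
  -- basic structure of the julia set
  have hlev : ∀ z, z ∈ L.julia → ∀ k, z ∈ (⋃ j, L.I1 j) ∧ L.σ z ∈ L.lev k := by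
    intro z hz k
    exact Set.mem_iInter.mp hz k
  have horb : ∀ k, f k ∈ L.julia := by
    intro k; induction k with
    | zero => exact hx
    | succ k ih =>
      have hsucc : f (k+1) = L.σ (f k) := Function.iterate_succ_apply' L.σ k x
      rw [hsucc]
      exact Set.mem_iInter.mpr fun t => (hlev _ ih (t+1)).2
  -- choices of interval data
  choose cI dI hcdI hIeq using L.hI
  choose c1 d1 hcd1 hI1eq using L.hI1
  choose isub hsub' using L.hsub
  choose br a b ha hab himg using L.haff
  -- the branch of each iterate
  have hfI1 : ∀ k, ∃ j, f k ∈ L.I1 j := fun k =>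
    Set.mem_iUnion.mp (hlev _ (horb k) 0).1
  choose j hj using hfI1
  have hfS : ∀ k, f k ∈ ⋃ i, L.I i := fun k =>
    Set.mem_iUnion.mpr ⟨isub (j k), hsub' (j k) (hj k)⟩
  -- lengths
  have len1pos : ∀ jj, (0:ℝ) < d1 jj - c1 jj := fun jj => sub_pos.mpr (hcd1 jj)
  have lenIpos : ∀ i, (0:ℝ) < dI i - cI i := fun i => sub_pos.mpr (hcdI i)
  -- slope-length relation
  have hslope : ∀ jj, |a jj| * (d1 jj - c1 jj) = dI (br jj) - cI (br jj) := by
    intro jj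
    have himg' : (fun z => a jj * z + b jj) '' L.I1 jj = L.I (br jj) := by
      rw [← himg jj]
      exact (Set.image_congr fun z hz => (hab jj z hz).symm)
    rw [hI1eq jj, hIeq (br jj)] at himg'
    rcases (ha jj).lt_or_gt with hneg | hpos
    · rw [image_affine_Ioo_neg hneg] at himg'
      obtain ⟨h1, h2⟩ := Ioo_eq_Ioo (by nlinarith [hcd1 jj] : a jj * d1 jj + b jj < a jj * c1 jj + b jj) himg'
      rw [abs_of_neg hneg]; nlinarith
    · have : (fun z => a jj * z + b jj) = (a jj * · + b jj) := rfl
      rw [this, Set.image_affine_Ioo hpos] at himg'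
      obtain ⟨h1, h2⟩ := Ioo_eq_Ioo (by nlinarith [hcd1 jj] : a jj * c1 jj + b jj < a jj * d1 jj + b jj) himg'
      rw [abs_of_pos hpos]; nlinarith
  -- the step relation along the orbit
  have hfstep : ∀ k, f (k+1) = a (j k) * f k + b (j k) := by
    intro k
    rw [show f (k+1) = L.σ (f k) from Function.iterate_succ_apply' L.σ k x]
    exact hab (j k) _ (hj k)
  have hnext : ∀ k, d1 (j (k+1)) - c1 (j (k+1)) ≤ dI (br (j k)) - cI (br (j k)) := by
    intro k
    have h1 : f (k+1) ∈ L.I (br (j k)) := by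
      rw [← himg (j k), show f (k+1) = L.σ (f k) from Function.iterate_succ_apply' L.σ k x]
      exact Set.mem_image_of_mem _ (hj k)
    have h2 : f (k+1) ∈ L.I (isub (j (k+1))) := hsub' _ (hj (k+1))
    have hieq : isub (j (k+1)) = br (j k) := by
      by_contra hne
      exact Set.disjoint_left.mp (L.hdisj hne) h2 h1
    have hss : L.I1 (j (k+1)) ⊆ L.I (br (j k)) := hieq ▸ hsub' (j (k+1))
    rw [hI1eq (j (k+1)), hIeq (br (j k))] at hss
    exact Ioo_subset_len (hcd1 _) hss
  -- the cluster set
  set Ω : Set ℝ := {y : ℝ | ∃ φ : ℕ → ℕ, Filter.Tendsto φ Filter.atTop Filter.atTop ∧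
      Filter.Tendsto (fun t => L.σ^[φ t] x) Filter.atTop (nhds y)} with hΩdef
  by_contra hinf
  rw [Set.not_infinite] at hinf
  -- boundedness of the orbit
  have hSbd : Bornology.IsBounded (⋃ i, L.I i) := by
    rw [← Set.biUnion_univ]
    refine (Bornology.isBounded_biUnion Set.finite_univ).2 fun i _ => ?_
    rw [hIeq i]; exact isBounded_Ioo _ _
  -- Ω is nonempty
  obtain ⟨y0, -, φ0, hφ0, hty0⟩ := tendsto_subseq_of_bounded hSbd hfS
  have hΩne : Ω.Nonempty := ⟨y0, φ0, hφ0.tendsto_atTop, hty0⟩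
  have hΩc : IsCompact Ω := hinf.isCompact
  -- nearest points
  choose y hyΩ hyd using fun k => hΩc.exists_infDist_eq_dist hΩne (f k)
  set ε : ℕ → ℝ := fun k => infDist (f k) Ω with hε
  have hεnn : ∀ k, 0 ≤ ε k := fun k => infDist_nonneg
  -- ε tends to zero
  have hε0 : Filter.Tendsto ε Filter.atTop (nhds 0) := by
    by_contra hcon
    rw [Metric.tendsto_atTop] at hcon
    push_neg at hcon
    obtain ⟨η, hηpos, hη⟩ := hcon
    have hT : {k : ℕ | η ≤ ε k}.Infinite := by
      rw [← Nat.frequently_atTop_iff_infinite]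
      rw [Filter.frequently_atTop]
      intro K
      obtain ⟨k, hk1, hk2⟩ := hη K
      refine ⟨k, hk1, ?_⟩
      rw [Real.dist_eq, abs_of_nonneg (by simpa using hεnn k)] at hk2
      simpa using hk2
    set q := Nat.nth (fun k => η ≤ ε k) with hq
    have hqsm : StrictMono q := Nat.nth_strictMono hT
    obtain ⟨y1, -, ψ, hψ, hty1⟩ := tendsto_subseq_of_bounded hSbd (fun t => hfS (q t))
    have hy1Ω : y1 ∈ Ω := ⟨q ∘ ψ, (hqsm.comp hψ).tendsto_atTop, hty1⟩
    have hlim : Filter.Tendsto (fun t => infDist (f (q (ψ t))) Ω) Filter.atTop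
        (nhds (infDist y1 Ω)) := ((continuous_infDist_pt Ω).tendsto y1).comp hty1
    have hge : η ≤ infDist y1 Ω := by
      refine ge_of_tendsto' hlim fun t => ?_
      exact Nat.nth_mem_of_infinite hT (ψ t)
    rw [infDist_zero_of_mem hy1Ω] at hge
    linarith
  -- recurrence of symbols
  obtain ⟨K₀, hK₀⟩ := eventually_fiber_infinite (fun k => (y k, j k))
    (Set.Finite.subset (hinf.prod Set.finite_univ)
      (by rintro _ ⟨k, rfl⟩; exact ⟨hyΩ k, Set.mem_univ _⟩))
  -- image of the nearest point under the branch is again a cluster point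
  have hwΩ : ∀ k, K₀ ≤ k → a (j k) * y k + b (j k) ∈ Ω := by
    intro k hk
    have hT : {k' : ℕ | (y k', j k') = (y k, j k)}.Infinite := hK₀ k hk
    set q := Nat.nth (fun k' => (y k', j k') = (y k, j k)) with hqdef
    have hqsm : StrictMono q := Nat.nth_strictMono hT
    refine ⟨fun t => q t + 1,
      Filter.tendsto_atTop_mono (fun t => Nat.le_succ _) hqsm.tendsto_atTop, ?_⟩
    rw [tendsto_iff_dist_tendsto_zero]
    have hcalc : (fun t => dist (f (q t + 1)) (a (j k) * y k + b (j k))) =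
        fun t => |a (j k)| * ε (q t) := by
      funext t
      have hPq : (y (q t), j (q t)) = (y k, j k) := Nat.nth_mem_of_infinite hT t
      have hy' : y (q t) = y k := congrArg Prod.fst hPq
      have hj' : j (q t) = j k := congrArg Prod.snd hPq
      have hεq : ε (q t) = dist (f (q t)) (y (q t)) := hyd (q t)
      rw [hεq, hy', ← hj', hfstep (q t), Real.dist_eq, Real.dist_eq, ← abs_mul]
      ring_nf
    rw [hcalc]
    have : Filter.Tendsto (fun t => ε (q t)) Filter.atTop (nhds 0) :=
      hε0.comp hqsm.tendsto_atTop
    simpa using this.const_mul |a (j k)|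
  -- a uniform bound on the slopes
  set A : ℝ := 1 + ∑ jj : Fin m, |a jj| with hAdef
  have hA : ∀ jj, |a jj| ≤ A := by
    intro jj
    have h1 : |a jj| ≤ ∑ jj' : Fin m, |a jj'| :=
      Finset.single_le_sum (fun jj' _ => abs_nonneg (a jj')) (Finset.mem_univ jj)
    rw [hAdef]; linarith
  have hApos : 0 < A := by
    rw [hAdef]
    have : (0:ℝ) ≤ ∑ jj : Fin m, |a jj| := Finset.sum_nonneg fun jj' _ => abs_nonneg _
    linarith
  -- a uniform separation of the finite set Ω
  obtain ⟨δ, hδpos, hδ⟩ : ∃ δ > (0:ℝ), ∀ p ∈ Ω, ∀ q ∈ Ω, p ≠ q → δ ≤ dist p q := by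
    by_cases hD : {d : ℝ | ∃ p ∈ Ω, ∃ q ∈ Ω, p ≠ q ∧ d = dist p q}.Nonempty
    · have hDfin : {d : ℝ | ∃ p ∈ Ω, ∃ q ∈ Ω, p ≠ q ∧ d = dist p q}.Finite := by
        refine Set.Finite.subset ((hinf.prod hinf).image fun pq => dist pq.1 pq.2) ?_
        rintro _ ⟨p, hp, q, hq, -, rfl⟩
        exact ⟨(p, q), ⟨hp, hq⟩, rfl⟩
      obtain ⟨δ, hδmem, hδmin⟩ := Set.exists_min_image _ id hDfin hD
      obtain ⟨p, hp, q, hq, hne, rfl⟩ := hδmem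
      refine ⟨dist p q, dist_pos.mpr hne, fun p' hp' q' hq' hne' => ?_⟩
      exact hδmin _ ⟨p', hp', q', hq', hne', rfl⟩
    · refine ⟨1, one_pos, fun p hp q hq hne => ?_⟩
      exact absurd ⟨p, hp, q, hq, hne, rfl⟩ (fun h => hD ⟨_, h⟩)
  -- from some time on everything is close and the exact recursion holds
  obtain ⟨K₁', hK₁'⟩ := (Filter.eventually_atTop).mp
    (hε0.eventually (gt_mem_nhds (show (0:ℝ) < δ / (2 * A) by positivity)))
  set K₁ : ℕ := max K₁' K₀ with hK₁def
  have hsmall : ∀ k, K₁ ≤ k → ε k * (2 * A) < δ := by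
    intro k hk
    have h1 : ε k < δ / (2 * A) := hK₁' k (le_trans (le_max_left _ _) hk)
    rw [← lt_div_iff₀ (by positivity)]
    exact h1
  have hrec : ∀ k, K₁ ≤ k → ε (k+1) = |a (j k)| * ε k := by
    intro k hk
    have hw : a (j k) * y k + b (j k) ∈ Ω := hwΩ k (le_trans (le_max_right _ _) hk)
    have hdistw : dist (f (k+1)) (a (j k) * y k + b (j k)) = |a (j k)| * ε k := by
      rw [hfstep k, show ε k = dist (f k) (y k) from hyd k,
        Real.dist_eq, Real.dist_eq, ← abs_mul]
      ring_nf
    have hle : ε (k+1) ≤ |a (j k)| * ε k := by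
      rw [← hdistw]
      exact infDist_le_dist_of_mem hw
    rcases eq_or_ne (y (k+1)) (a (j k) * y k + b (j k)) with heq | hne
    · rw [show ε (k+1) = dist (f (k+1)) (y (k+1)) from hyd (k+1), heq, hdistw]
    · exfalso
      have h1 : δ ≤ dist (y (k+1)) (a (j k) * y k + b (j k)) :=
        hδ _ (hyΩ (k+1)) _ hw hne
      have h2 : dist (y (k+1)) (a (j k) * y k + b (j k)) ≤
          dist (y (k+1)) (f (k+1)) + dist (f (k+1)) (a (j k) * y k + b (j k)) :=
        dist_triangle _ _ _
      have h3 : dist (y (k+1)) (f (k+1)) = ε (k+1) := by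
        rw [dist_comm]; exact (hyd (k+1)).symm
      have h4 : |a (j k)| * ε k ≤ A * ε k :=
        mul_le_mul_of_nonneg_right (hA _) (hεnn k)
      have h5 := hsmall k hk
      rw [h3, hdistw] at h2
      linarith
  -- the quantity ε k / |I¹_{j k}| is monotone from time K₁ on
  have hmono : ∀ k, K₁ ≤ k → ε k / (d1 (j k) - c1 (j k)) ≤
      ε (k+1) / (d1 (j (k+1)) - c1 (j (k+1))) := by
    intro k hk
    rw [div_le_div_iff₀ (len1pos _) (len1pos _)]
    have h1 := hrec k hk
    have h2 := hnext k
    have h3 := hslope (j k)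
    have h4 := hεnn k
    calc ε k * (d1 (j (k+1)) - c1 (j (k+1)))
        ≤ ε k * (dI (br (j k)) - cI (br (j k))) := mul_le_mul_of_nonneg_left h2 h4
      _ = ε k * (|a (j k)| * (d1 (j k) - c1 (j k))) := by rw [h3]
      _ = ε (k+1) * (d1 (j k) - c1 (j k)) := by rw [h1]; ring
  have hmono2 : ∀ k₀, K₁ ≤ k₀ → ∀ k, k₀ ≤ k →
      ε k₀ / (d1 (j k₀) - c1 (j k₀)) ≤ ε k / (d1 (j k) - c1 (j k)) := by
    intro k₀ hk₀ k
    induction k with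
    | zero =>
      intro hk
      obtain rfl : k₀ = 0 := Nat.le_zero.mp hk
      exact le_refl _
    | succ k ih =>
      intro hk
      rcases Nat.lt_or_ge k₀ (k+1) with hlt | hge
      · have hk' : k₀ ≤ k := Nat.lt_succ_iff.mp hlt
        exact le_trans (ih hk') (hmono k (le_trans hk₀ hk'))
      · obtain rfl : k₀ = k+1 := le_antisymm hk hge
        exact le_refl _
  by_cases hzero : ∀ k, K₁ ≤ k → f k ∈ Ω
  · -- then the orbit is eventually inside the finite set Ω : impossible
    have hsubΩ : Set.range (fun t : ℕ => f (K₁ + t)) ⊆ Ω := by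
      rintro _ ⟨t, rfl⟩; exact hzero _ (Nat.le_add_right _ _)
    have hinj2 : Function.Injective fun t : ℕ => f (K₁ + t) := by
      intro s t hst
      have := hwandering hst
      omega
    exact absurd (hinf.subset hsubΩ) (Set.infinite_range_of_injective hinj2)
  · push_neg at hzero
    obtain ⟨K₂, hK₂ge, hK₂⟩ := hzero
    have hεK₂ : 0 < ε K₂ := by
      rcases (hεnn K₂).lt_or_eq with h | h
      · exact h
      · exfalso
        have hd0 : dist (f K₂) (y K₂) = 0 := by rw [← hyd K₂]; exact h.symm
        exact hK₂ (dist_eq_zero.mp hd0 ▸ hyΩ K₂)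
    obtain ⟨jmin, -, hjmin⟩ := Finset.exists_min_image Finset.univ
      (fun jj => d1 jj - c1 jj) ⟨j 0, Finset.mem_univ _⟩
    have hCpos : 0 < ε K₂ / (d1 (j K₂) - c1 (j K₂)) := div_pos hεK₂ (len1pos _)
    have hLminpos : 0 < d1 jmin - c1 jmin := len1pos _
    have hlow : ∀ k, K₂ ≤ k →
        ε K₂ / (d1 (j K₂) - c1 (j K₂)) * (d1 jmin - c1 jmin) ≤ ε k := by
      intro k hk
      have h1 := hmono2 K₂ hK₂ge k hk
      have h2 : d1 jmin - c1 jmin ≤ d1 (j k) - c1 (j k) := hjmin _ (Finset.mem_univ _)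
      have h3 : 0 < ε k / (d1 (j k) - c1 (j k)) := lt_of_lt_of_le hCpos h1
      calc ε K₂ / (d1 (j K₂) - c1 (j K₂)) * (d1 jmin - c1 jmin)
          ≤ ε k / (d1 (j k) - c1 (j k)) * (d1 jmin - c1 jmin) :=
            mul_le_mul_of_nonneg_right h1 hLminpos.le
        _ ≤ ε k / (d1 (j k) - c1 (j k)) * (d1 (j k) - c1 (j k)) :=
            mul_le_mul_of_nonneg_left h2 h3.le
        _ = ε k := div_mul_cancel₀ _ (len1pos (j k)).ne'
    obtain ⟨k, hk1, hk2⟩ := ((hε0.eventually (gt_mem_nhds (mul_pos hCpos hLminpos))).and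
      (Filter.eventually_ge_atTop K₂)).exists
    exact absurd (hlow k hk2) (not_le.mpr hk1)
end

section
/- Let X be a nonempty compact, locally connected metric space. Let (φ_n) be a sequence of homeomorphisms of X onto itself converging uniformly to a map h : X → X. Then h is a continuous surjection, and for every closed connected subset E ⊆ X the preimage h^{-1}(E) is a closed connected subset of X. -/
open Metric Set

/-- Uniform local connectedness of a compact locally connected metric space. -/
lemma ulc_aux {X : Type*} [MetricSpace X] [CompactSpace X] [LocallyConnectedSpace X]
    {ε : ℝ} (hε : 0 < ε) :
    ∃ δ, 0 < δ ∧ δ ≤ ε ∧ ∀ x y : X, dist x y < δ →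
      ∃ S : Set X, IsPreconnected S ∧ x ∈ S ∧ y ∈ S ∧ ∀ z ∈ S, dist x z ≤ ε := by
  have hV : ∀ p : X, ∃ V : Set X, (IsOpen V ∧ p ∈ V ∧ IsConnected V) ∧ V ⊆ ball p (ε/2) :=
    fun p => (LocallyConnectedSpace.open_connected_basis p).mem_iff.mp
      (ball_mem_nhds p (by linarith))
  choose V hV hVsub using hV
  obtain ⟨δ, hδ, hcov⟩ := lebesgue_number_lemma_of_metric isCompact_univ
    (fun p => (hV p).1) (fun x _ => mem_iUnion.2 ⟨x, (hV x).2.1⟩)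
  refine ⟨min δ ε, lt_min hδ hε, min_le_right _ _, fun x y hxy => ?_⟩
  obtain ⟨p, hp⟩ := hcov x (mem_univ x)
  have hxV : x ∈ V p := hp (mem_ball_self hδ)
  have hyV : y ∈ V p := hp (by
    rw [mem_ball, dist_comm]
    exact lt_of_lt_of_le hxy (min_le_left _ _))
  refine ⟨V p, (hV p).2.2.isPreconnected, hxV, hyV, fun z hz => ?_⟩
  have h1 : dist x p < ε/2 := hVsub p hxV
  have h2 : dist z p < ε/2 := hVsub p hz
  calc dist x z ≤ dist x p + dist p z := dist_triangle _ _ _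
  _ = dist x p + dist z p := by rw [dist_comm p z]
  _ ≤ ε := by linarith

/-- A nested intersection of closed connected sets in a compact metric space is connected. -/
lemma isConnected_iInter_nested {X : Type*} [MetricSpace X] [CompactSpace X] {F : ℕ → Set X}
    (hcl : ∀ n, IsClosed (F n)) (hconn : ∀ n, IsConnected (F n))
    (hanti : Antitone F) : IsConnected (⋂ n, F n) := by
  have hcomp : ∀ n, IsCompact (F n) := fun n => (hcl n).isCompact
  have hne : (⋂ n, F n).Nonempty :=
    IsCompact.nonempty_iInter_of_sequence_nonempty_isCompact_isClosed F
      (fun n => hanti (Nat.le_succ n)) (fun n => (hconn n).nonempty) (hcomp 0) hcl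
  refine ⟨hne, fun u v hu hv hsub hu' hv' => ?_⟩
  set K := ⋂ n, F n with hK
  by_contra hcon
  rw [Set.not_nonempty_iff_eq_empty] at hcon
  have hKcl : IsClosed K := isClosed_iInter hcl
  -- A = K ∩ u is closed since it avoids v
  have hAv : K ∩ u ⊆ vᶜ := by
    intro x hx hxv
    exact absurd (show x ∈ K ∩ (u ∩ v) from ⟨hx.1, hx.2, hxv⟩) (by simp [hcon])
  have hBu : K ∩ v ⊆ uᶜ := by
    intro x hx hxu
    exact absurd (show x ∈ K ∩ (u ∩ v) from ⟨hx.1, hxu, hx.2⟩) (by simp [hcon])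
  have hAeq : K ∩ u = K ∩ vᶜ := by
    apply Subset.antisymm
    · exact fun x hx => ⟨hx.1, hAv hx⟩
    rintro x ⟨hxK, hxv⟩
    rcases hsub hxK with h | h
    · exact ⟨hxK, h⟩
    · exact absurd h hxv
  have hBeq : K ∩ v = K ∩ uᶜ := by
    apply Subset.antisymm
    · exact fun x hx => ⟨hx.1, hBu hx⟩
    rintro x ⟨hxK, hxu⟩
    rcases hsub hxK with h | h
    · exact absurd h hxu
    · exact ⟨hxK, h⟩
  have hAcl : IsClosed (K ∩ u) := hAeq ▸ hKcl.inter (isClosed_compl_iff.mpr hv)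
  have hBcl : IsClosed (K ∩ v) := hBeq ▸ hKcl.inter (isClosed_compl_iff.mpr hu)
  have hdisj : Disjoint (K ∩ u) (K ∩ v) := by
    rw [Set.disjoint_iff]
    rintro x ⟨⟨hxK, hxu⟩, ⟨_, hxv⟩⟩
    exact absurd (show x ∈ K ∩ (u ∩ v) from ⟨hxK, hxu, hxv⟩) (by simp [hcon])
  obtain ⟨U, W, hU, hW, hAU, hBW, hUW⟩ :=
    SeparatedNhds.of_isCompact_isCompact hAcl.isCompact hBcl.isCompact hdisj
  -- the sets F n \ (U ∪ W) are nested closed with empty intersection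
  have hiInter : (⋂ n, F n \ (U ∪ W)) = ∅ := by
    rw [Set.eq_empty_iff_forall_notMem]
    intro x hx
    have hxK : x ∈ K := mem_iInter.2 fun n => (mem_iInter.1 hx n).1
    have hxUW : x ∉ U ∪ W := (mem_iInter.1 hx 0).2
    rcases hsub hxK with h | h
    · exact hxUW (Or.inl (hAU ⟨hxK, h⟩))
    · exact hxUW (Or.inr (hBW ⟨hxK, h⟩))
  have hex : ∃ n, F n \ (U ∪ W) = ∅ := by
    by_contra hall
    push_neg at hall
    have := IsCompact.nonempty_iInter_of_sequence_nonempty_isCompact_isClosed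
      (fun n => F n \ (U ∪ W))
      (fun n => diff_subset_diff_left (hanti (Nat.le_succ n)))
      (fun n => hall n)
      ((hcomp 0).diff (hU.union hW))
      (fun n => (hcl n).sdiff (hU.union hW))
    rw [hiInter] at this
    exact absurd this (by simp [Set.not_nonempty_empty])
  obtain ⟨n, hn⟩ := hex
  have hFn : F n ⊆ U ∪ W := by
    intro x hx
    by_contra hxUW
    exact absurd (show x ∈ F n \ (U ∪ W) from ⟨hx, hxUW⟩) (by simp [hn])
  obtain ⟨a, haK, hau⟩ := hu'
  obtain ⟨b, hbK, hbv⟩ := hv'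
  have hne1 : (F n ∩ U).Nonempty := ⟨a, mem_iInter.1 haK n, hAU ⟨haK, hau⟩⟩
  have hne2 : (F n ∩ W).Nonempty := ⟨b, mem_iInter.1 hbK n, hBW ⟨hbK, hbv⟩⟩
  obtain ⟨x, _, hxU, hxW⟩ := (hconn n).isPreconnected U W hU hW hFn hne1 hne2
  exact (Set.disjoint_iff.1 hUW) ⟨hxU, hxW⟩

/-- The "connected hull": closed connected set squeezed between the open δ-neighbourhood
and the closed ε-neighbourhood of a closed connected set `E`. -/
lemma hull_aux {X : Type*} [MetricSpace X] {E : Set X} (hE : IsConnected E)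
    {ε δ : ℝ} (hε : 0 < ε)
    (hδ : ∀ x y : X, dist x y < δ →
      ∃ S : Set X, IsPreconnected S ∧ x ∈ S ∧ y ∈ S ∧ ∀ z ∈ S, dist x z ≤ ε) :
    ∃ K : Set X, IsClosed K ∧ IsConnected K ∧ E ⊆ K ∧
      (∀ x, infDist x E < δ → x ∈ K) ∧ ∀ x ∈ K, infDist x E ≤ ε := by
  obtain ⟨e₀, he₀⟩ := hE.nonempty
  set 𝒮 : Set (Set X) := {S | IsPreconnected S ∧ (S ∩ E).Nonempty ∧ ∀ z ∈ S, infDist z E ≤ ε}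
    with h𝒮
  set C : Set X := E ∪ ⋃₀ 𝒮 with hC
  have hCpre : IsPreconnected C := by
    have : C = ⋃₀ (insert E ((fun S => E ∪ S) '' 𝒮)) := by
      rw [hC]
      ext x
      simp only [Set.sUnion_insert, Set.mem_union, Set.sUnion_image, Set.mem_iUnion,
        Set.mem_sUnion]
      constructor
      · rintro (hx | ⟨S, hS, hxS⟩)
        · exact Or.inl hx
        · exact Or.inr ⟨S, hS, Or.inr hxS⟩
      · rintro (hx | ⟨S, hS, hx | hxS⟩)
        · exact Or.inl hx
        · exact Or.inl hx
        · exact Or.inr ⟨S, hS, hxS⟩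
    rw [this]
    apply isPreconnected_sUnion e₀
    · rintro s (rfl | ⟨S, _, rfl⟩)
      · exact he₀
      · exact Or.inl he₀
    · rintro s (rfl | ⟨S, hS, rfl⟩)
      · exact hE.isPreconnected
      · exact IsPreconnected.union' (by rw [Set.inter_comm]; exact hS.2.1)
          hE.isPreconnected hS.1
  have hCbound : C ⊆ {z | infDist z E ≤ ε} := by
    rintro x (hx | ⟨S, hS, hxS⟩)
    · simp [infDist_zero_of_mem hx, le_of_lt hε]
    · exact hS.2.2 x hxS
  have hclosed : IsClosed {z : X | infDist z E ≤ ε} :=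
    isClosed_le (continuous_infDist_pt E) continuous_const
  refine ⟨closure C, isClosed_closure, ⟨⟨e₀, subset_closure (Or.inl he₀)⟩,
    hCpre.closure⟩, (subset_closure.trans' fun x hx => Or.inl hx), ?_, ?_⟩
  · intro x hx
    obtain ⟨e, heE, hde⟩ := (infDist_lt_iff hE.nonempty).mp hx
    obtain ⟨S, hSpre, heS, hxS, hSd⟩ := hδ e x (by rwa [dist_comm])
    refine subset_closure (Or.inr ⟨S, ⟨hSpre, ⟨e, heS, heE⟩, fun z hz => ?_⟩, hxS⟩)
    exact le_trans (by rw [dist_comm]; exact infDist_le_dist_of_mem heE) (hSd z hz)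
  · intro x hx
    exact (hclosed.closure_subset_iff.mpr hCbound) hx

/-- Auxiliary decreasing sequence of radii. -/
noncomputable def epsSeq (d : ℝ → ℝ) : ℕ → ℝ
  | 0 => 1
  | k+1 => min (epsSeq d k / 2) (d (epsSeq d k) / 3)

/-!
STATEMENT 16 (part of Rees–Shishikura's Theorem A.1(2),(5)): Let `X` be a
nonempty compact, locally connected metric space, and let `(φₙ)` be a sequence
of homeomorphisms of `X` converging uniformly to a map `h : X → X`.  Then `h`
is a continuous surjection, and the preimage under `h` of any closed connected
subset is closed and connected.
-/
theorem uniform_limit_of_homeomorphisms (X : Type*) [MetricSpace X]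
    [CompactSpace X] [LocallyConnectedSpace X] [Nonempty X]
    (φ : ℕ → X ≃ₜ X) (h : X → X)
    (hconv : TendstoUniformly (fun n x => φ n x) h Filter.atTop) :
    Continuous h ∧ Function.Surjective h ∧
    ∀ E : Set X, IsClosed E → IsConnected E →
      IsClosed (h ⁻¹' E) ∧ IsConnected (h ⁻¹' E) := by
  have hcont : Continuous h :=
    hconv.continuous (Filter.Eventually.of_forall fun n => (φ n).continuous).frequently
  have hdist : ∀ r : ℝ, 0 < r → ∃ n : ℕ, ∀ x, dist (h x) (φ n x) < r := fun r hr =>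
    (Metric.tendstoUniformly_iff.mp hconv r hr).exists
  have hsurj : Function.Surjective h := by
    have hrange : IsClosed (Set.range h) := (isCompact_range hcont).isClosed
    intro y
    have hmem : y ∈ closure (Set.range h) := by
      rw [Metric.mem_closure_iff]
      intro r hr
      obtain ⟨n, hn⟩ := hdist r hr
      refine ⟨h ((φ n).symm y), Set.mem_range_self _, ?_⟩
      have := hn ((φ n).symm y)
      rw [(φ n).apply_symm_apply] at this
      rwa [dist_comm]
    rw [hrange.closure_eq] at hmem
    exact hmem
  refine ⟨hcont, hsurj, fun E hEcl hEconn => ?_⟩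
  refine ⟨hEcl.preimage hcont, ?_⟩
  -- choose the modulus of uniform local connectedness
  have hulc := fun (ε : ℝ) (hε : 0 < ε) => ulc_aux (X := X) hε
  choose! d hd1 hd2 hd3 using hulc
  choose! N hN using hdist
  set eps : ℕ → ℝ := epsSeq d with heps
  have heps0 : ∀ k, 0 < eps k := by
    intro k
    induction k with
    | zero => norm_num [heps, epsSeq]
    | succ k ih =>
      have := hd1 (eps k) ih
      have h2 : eps (k+1) = min (eps k / 2) (d (eps k) / 3) := rfl
      rw [h2]
      exact lt_min (by linarith) (by linarith)
  have hepsd : ∀ k, 0 < d (eps k) := fun k => hd1 _ (heps0 k)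
  have hepssucc : ∀ k, eps (k+1) ≤ d (eps k) / 3 := fun k => min_le_right _ _
  have hepshalf : ∀ k, eps (k+1) ≤ eps k / 2 := fun k => min_le_left _ _
  have hepsle : ∀ k, eps k ≤ (1/2 : ℝ)^k := by
    intro k
    induction k with
    | zero => norm_num [heps, epsSeq]
    | succ k ih =>
      calc eps (k+1) ≤ eps k / 2 := hepshalf k
      _ ≤ (1/2)^k / 2 := by linarith
      _ = (1/2)^(k+1) := by ring
  -- the hulls
  have hhull : ∀ k : ℕ, ∃ K : Set X, IsClosed K ∧ IsConnected K ∧ E ⊆ K ∧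
      (∀ x, Metric.infDist x E < d (eps k) → x ∈ K) ∧
      ∀ x ∈ K, Metric.infDist x E ≤ eps k :=
    fun k => hull_aux hEconn (heps0 k) (hd3 (eps k) (heps0 k))
  choose K hK1 hK2 hK3 hK4 hK5 using hhull
  set n : ℕ → ℕ := fun k => N (d (eps k) / 3) with hn
  have hNd : ∀ k x, dist (h x) (φ (n k) x) < d (eps k) / 3 :=
    fun k => hN _ (by have := hepsd k; linarith)
  set F : ℕ → Set X := fun k => (φ (n k)) ⁻¹' (K k) with hF
  have hFcl : ∀ k, IsClosed (F k) := fun k => (hK1 k).preimage (φ (n k)).continuous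
  have hFconn : ∀ k, IsConnected (F k) := by
    intro k
    have : F k = (φ (n k)).symm '' (K k) := by
      ext x
      constructor
      · intro hx
        exact ⟨φ (n k) x, hx, (φ (n k)).symm_apply_apply x⟩
      · rintro ⟨y, hy, rfl⟩
        simpa [hF, (φ (n k)).apply_symm_apply] using hy
    rw [this]
    exact (hK2 k).image _ (φ (n k)).symm.continuous.continuousOn
  have hFanti : ∀ k, F (k+1) ⊆ F k := by
    intro k x hx
    have hxK : φ (n (k+1)) x ∈ K (k+1) := hx
    have h5 := hK5 (k+1) _ hxK
    have hd1' := hNd k x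
    have hd2' := hNd (k+1) x
    apply hK4 k
    have htri : Metric.infDist (φ (n k) x) E ≤
        Metric.infDist (φ (n (k+1)) x) E + dist (φ (n k) x) (φ (n (k+1)) x) :=
      Metric.infDist_le_infDist_add_dist
    have htri2 : dist (φ (n k) x) (φ (n (k+1)) x) ≤
        dist (φ (n k) x) (h x) + dist (h x) (φ (n (k+1)) x) := dist_triangle _ _ _
    rw [dist_comm (φ (n k) x) (h x)] at htri2
    have hsucc := hepssucc k
    have hsucc2 : d (eps (k+1)) ≤ eps (k+1) := hd2 _ (heps0 (k+1))
    have hpos := hepsd k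
    linarith
  -- the key identity
  have hkey : h ⁻¹' E = ⋂ k, F k := by
    apply Set.Subset.antisymm
    · intro x hx
      refine Set.mem_iInter.2 fun k => ?_
      apply hK4 k
      have h1 : Metric.infDist (φ (n k) x) E ≤
          Metric.infDist (h x) E + dist (φ (n k) x) (h x) :=
        Metric.infDist_le_infDist_add_dist
      rw [Metric.infDist_zero_of_mem (show h x ∈ E from hx), dist_comm] at h1
      have := hNd k x
      have := hepsd k
      linarith
    · intro x hx
      have hbound : ∀ k, Metric.infDist (h x) E ≤ 2 * (1/2 : ℝ)^k := by
        intro k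
        have hxk : φ (n k) x ∈ K k := Set.mem_iInter.1 hx k
        have h5 := hK5 k _ hxk
        have h1 : Metric.infDist (h x) E ≤
            Metric.infDist (φ (n k) x) E + dist (h x) (φ (n k) x) :=
          Metric.infDist_le_infDist_add_dist
        have h2 := hNd k x
        have h3 : d (eps k) ≤ eps k := hd2 _ (heps0 k)
        have h4 := hepsle k
        have h6 : (0:ℝ) ≤ (1/2:ℝ)^k := by positivity
        linarith
      have hzero : Metric.infDist (h x) E = 0 := by
        by_contra hne
        have hpos : 0 < Metric.infDist (h x) E :=
          lt_of_le_of_ne Metric.infDist_nonneg (Ne.symm hne)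
        obtain ⟨k, hk⟩ := exists_pow_lt_of_lt_one (by linarith : (0:ℝ) < Metric.infDist (h x) E / 2)
          (by norm_num : (1/2 : ℝ) < 1)
        have := hbound k
        linarith
      exact (hEcl.mem_iff_infDist_zero hEconn.nonempty).mpr hzero
  rw [hkey]
  exact isConnected_iInter_nested hFcl hFconn (antitone_nat_of_succ_le hFanti)
end
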